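/- arXiv:1504.05778 — 3 statements merged into one kernel-verified Lean document; each statement's English description precedes it below -/
import Mathlib

section
/- Let 0 < α < 1. There exists a constant c_α depending only on α such that for every n ∈ ℕ_+ and every x ∈ G, |K_n^α(x)| ≤ (c_α / A_{n−1}^α) Σ_{j=0}^{|n|} 2^{jα} K_{2^j}(x), where |n| is the integer with 2^{|n|} ≤ n < 2^{|n|+1}. -/
open MeasureTheory Filter Finset
open scoped ENNReal NNReal

noncomputable section

/-- The dyadic group `G = ∏ Z₂`. -/
abbrev G : Type := ℕ → ZMod 2

instance : TopologicalSpace (ZMod 2) := ⊥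
instance : DiscreteTopology (ZMod 2) := ⟨rfl⟩
instance : MeasurableSpace (ZMod 2) := ⊤
instance : BorelSpace (ZMod 2) := ⟨borel_eq_top_of_discrete.symm⟩
instance : ContinuousAdd (ZMod 2) := ⟨continuous_of_discreteTopology⟩
instance : ContinuousNeg (ZMod 2) := ⟨continuous_of_discreteTopology⟩
instance : IsTopologicalAddGroup (ZMod 2) := ⟨⟩

/-- The normalized Haar measure `μ` on the dyadic group `G`. -/
def μG : Measure G := Measure.addHaarMeasure ⊤

/-- The Rademacher functions `r_k(x) = (-1)^{x_k}`. -/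
def rad (k : ℕ) (x : G) : ℝ := (-1 : ℝ) ^ (x k).val

/-- The Walsh functions `w_n = ∏_k r_k^{n_k}`, where `n = ∑ n_k 2^k`. -/
def walsh (n : ℕ) (x : G) : ℝ := ∏ k ∈ Finset.range n, rad k x ^ (Nat.testBit n k).toNat

/-- The Dirichlet kernels `D_n = ∑_{k=0}^{n-1} w_k`. -/
def dirichlet (n : ℕ) (x : G) : ℝ := ∑ k ∈ Finset.range n, walsh k x

/-- The Fejér kernels `K_n = (1/n) ∑_{k=1}^{n} D_k`. -/
def fejer (n : ℕ) (x : G) : ℝ := (n : ℝ)⁻¹ * ∑ k ∈ Finset.Icc 1 n, dirichlet k x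

/-- The Cesàro numbers `A_n^α = ((α+1)⋯(α+n))/n!`. -/
def cesA (α : ℝ) (n : ℕ) : ℝ := (∏ i ∈ Finset.range n, (α + i + 1)) / n.factorial

/-- The `(C,α)` kernels `K_n^α = (1/A_n^α) ∑_{k=1}^n A_{n-k}^{α-1} D_k`. -/
def cesKernel (α : ℝ) (n : ℕ) (x : G) : ℝ :=
  (cesA α n)⁻¹ * ∑ k ∈ Finset.Icc 1 n, cesA (α - 1) (n - k) * dirichlet k x

/-- Walsh–Fourier coefficients of an integrable function. -/
def walshCoeff (f : G → ℝ) (k : ℕ) : ℝ := ∫ x, f x * walsh k x ∂μG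

/-- Partial sums `S_m f` of the Walsh–Fourier series. -/
def partialSum (f : G → ℝ) (m : ℕ) (x : G) : ℝ :=
  ∑ k ∈ Finset.range m, walshCoeff f k * walsh k x

/-- The `(C,α)` means `σ_n^α f = (1/A_n^α) ∑_{k=1}^n A_{n-k}^{α-1} S_k f`. -/
def cesaroMean (α : ℝ) (f : G → ℝ) (n : ℕ) (x : G) : ℝ :=
  (cesA α n)⁻¹ * ∑ k ∈ Finset.Icc 1 n, cesA (α - 1) (n - k) * partialSum f k x

/-- The dyadic interval `I_n(x)`. -/
def dyadicI (n : ℕ) (x : G) : Set G := {y | ∀ i < n, y i = x i}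

/-- `e_k ∈ G`: the element whose `k`-th coordinate is `1` and all others `0`. -/
def eG (k : ℕ) : G := fun i => if i = k then 1 else 0

/-- The projection onto the first `n` coordinates. -/
def projG (n : ℕ) : G → (Fin n → ZMod 2) := fun x i => x i

/-- The dyadic filtration `ℱ_n`, generated by the dyadic intervals of length `n`. -/
def dyadicF : Filtration ℕ (inferInstance : MeasurableSpace G) where
  seq n := MeasurableSpace.comap (projG n) inferInstance
  mono' := by
    intro n m hnm
    have h : projG n = (fun (y : Fin m → ZMod 2) (i : Fin n) => y (Fin.castLE hnm i)) ∘ projG m :=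
      rfl
    simp only []
    rw [h, ← MeasurableSpace.comap_comp]
    exact MeasurableSpace.comap_mono
      ((measurable_pi_lambda _ fun i => measurable_pi_apply _).comap_le)
  le' := fun n => (measurable_pi_lambda _ fun i => measurable_pi_apply _).comap_le

/-- The Walsh–Fourier coefficients `F̂(k) = lim_n ∫ F_n w_k dμ` of a martingale. -/
def martCoeff (F : ℕ → G → ℝ) (k : ℕ) : ℝ :=
  limUnder atTop (fun n => ∫ x, F n x * walsh k x ∂μG)

/-- Partial sums `S_m F` of the Walsh–Fourier series of a martingale. -/
def martSum (F : ℕ → G → ℝ) (m : ℕ) (x : G) : ℝ :=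
  ∑ k ∈ Finset.range m, martCoeff F k * walsh k x

/-- The `(C,α)` means of a martingale. -/
def martCesaro (α : ℝ) (F : ℕ → G → ℝ) (n : ℕ) (x : G) : ℝ :=
  (cesA α n)⁻¹ * ∑ k ∈ Finset.Icc 1 n, cesA (α - 1) (n - k) * martSum F k x

/-- The `L_p(G)` quasi-norm `(∫ |f|^p dμ)^{1/p}`, valued in `ℝ≥0∞`. -/
def LpNormG (p : ℝ) (f : G → ℝ) : ℝ≥0∞ :=
  (∫⁻ x, ENNReal.ofReal |f x| ^ p ∂μG) ^ (1 / p)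

/-- The Hardy space quasi-norm `‖F‖_{H_p} = ‖sup_n |F_n|‖_p` of a martingale. -/
def hardyNorm (p : ℝ) (F : ℕ → G → ℝ) : ℝ≥0∞ :=
  (∫⁻ x, (⨆ n, ENNReal.ofReal |F n x|) ^ p ∂μG) ^ (1 / p)

/-- The Hardy quasi-norm of an integrable function, via its generated martingale `(E_n f)`. -/
def hardyFnNorm (p : ℝ) (f : G → ℝ) : ℝ≥0∞ :=
  hardyNorm p (fun n => μG[f | dyadicF n])


namespace S3

/-! ### Rademacher / Walsh basics -/

lemma rad_eq (k : ℕ) (x : G) : rad k x = 1 ∨ rad k x = -1 := by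
  rcases Nat.even_or_odd ((x k).val) with h | h
  · left; exact h.neg_one_pow
  · right; exact h.neg_one_pow

lemma rad_sq (k : ℕ) (x : G) : rad k x * rad k x = 1 := by
  rcases rad_eq k x with h | h <;> rw [h] <;> norm_num

lemma walsh_eq (n : ℕ) (x : G) : walsh n x = 1 ∨ walsh n x = -1 := by
  unfold walsh
  refine Finset.prod_induction _ (fun r => r = 1 ∨ r = -1) ?_ (Or.inl rfl) ?_
  · rintro a b (ha | ha) (hb | hb) <;> rw [ha, hb] <;> norm_num
  · intro k _
    rcases rad_eq k x with h | h <;> rw [h] <;> rcases (n.testBit k).toNat with _ | m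
    · left; norm_num
    · left; exact one_pow _
    · left; norm_num
    · rcases Nat.even_or_odd (m + 1) with he | he
      · left; exact he.neg_one_pow
      · right; exact he.neg_one_pow

lemma abs_walsh (n : ℕ) (x : G) : |walsh n x| = 1 := by
  rcases walsh_eq n x with h | h <;> rw [h] <;> norm_num

lemma walsh_eq_prod {n M : ℕ} (h : n < 2 ^ M) (x : G) :
    walsh n x = ∏ k ∈ Finset.range M, rad k x ^ (n.testBit k).toNat := by
  unfold walsh
  rcases le_total n M with hnM | hMn
  · refine Finset.prod_subset (Finset.range_subset_range.2 hnM) ?_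
    intro k hk hnk
    simp only [Finset.mem_range, not_lt] at hnk
    have : n < 2 ^ k := lt_of_lt_of_le ((Nat.lt_two_pow_self (n := n))) (Nat.pow_le_pow_right (by norm_num) hnk)
    rw [Nat.testBit_lt_two_pow this]; rfl
  · symm
    refine Finset.prod_subset (Finset.range_subset_range.2 hMn) ?_
    intro k hk hMk
    simp only [Finset.mem_range, not_lt] at hMk
    have : n < 2 ^ k := lt_of_lt_of_le h (Nat.pow_le_pow_right (by norm_num) hMk)
    rw [Nat.testBit_lt_two_pow this]; rfl

lemma walsh_mul (a b : ℕ) (x : G) : walsh a x * walsh b x = walsh (a ^^^ b) x := by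
  set M := max a b + 1 with hM
  have ha : a < 2 ^ M := lt_of_le_of_lt (le_max_left a b)
    (lt_of_lt_of_le Nat.lt_two_pow_self (Nat.pow_le_pow_right (by norm_num) (Nat.le_succ _)))
  have hb : b < 2 ^ M := lt_of_le_of_lt (le_max_right a b)
    (lt_of_lt_of_le Nat.lt_two_pow_self (Nat.pow_le_pow_right (by norm_num) (Nat.le_succ _)))
  have hx : a ^^^ b < 2 ^ M := Nat.xor_lt_two_pow ha hb
  rw [walsh_eq_prod ha, walsh_eq_prod hb, walsh_eq_prod hx, ← Finset.prod_mul_distrib]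
  refine Finset.prod_congr rfl fun k _ => ?_
  rw [Nat.testBit_xor]
  rcases hta : a.testBit k <;> rcases htb : b.testBit k <;>
    simp [Bool.xor, pow_succ, rad_sq k x]

lemma walsh_two_pow (t : ℕ) (x : G) : walsh (2 ^ t) x = rad t x := by
  rw [walsh_eq_prod (Nat.pow_lt_pow_right (by norm_num) (Nat.lt_succ_self t)) x]
  rw [Finset.prod_eq_single t]
  · rw [Nat.testBit_two_pow_self]; exact pow_one _
  · intro k _ hk
    rw [Nat.testBit_two_pow_of_ne (Ne.symm hk)]; rfl
  · intro h; exact absurd (Finset.self_mem_range_succ t) h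

/-! ### Bit arithmetic -/

lemma testBit_two_pow_add_lt {t k : ℕ} (j : ℕ) (hk : k < t) :
    (2 ^ t + j).testBit k = j.testBit k := by
  have h2k : 0 < 2 ^ k := Nat.pow_pos (by norm_num)
  have hdiv : (2 ^ t + j) / 2 ^ k = 2 ^ (t - k) + j / 2 ^ k := by
    have : 2 ^ t = 2 ^ (t - k) * 2 ^ k := by
      rw [← pow_add]; congr 1; omega
    rw [this, add_comm, Nat.add_mul_div_right _ _ h2k, add_comm]
  have heven : ∃ e, 2 ^ (t - k) = 2 * e := ⟨2 ^ (t - k - 1), by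
    rw [← pow_succ']; congr 1; omega⟩
  obtain ⟨e, he⟩ := heven
  have : (2 ^ t + j) / 2 ^ k % 2 = j / 2 ^ k % 2 := by rw [hdiv]; omega
  simp [Nat.testBit_eq_decide_div_mod_eq, this]

lemma testBit_two_pow_add_self {t : ℕ} (j : ℕ) (hj : j < 2 ^ t) :
    (2 ^ t + j).testBit t = true := by
  have h2t : 0 < 2 ^ t := Nat.pow_pos (by norm_num)
  have hdiv : (2 ^ t + j) / 2 ^ t = 1 := by
    rw [add_comm, Nat.add_div_right _ h2t, Nat.div_eq_of_lt hj]
  simp [Nat.testBit_eq_decide_div_mod_eq, hdiv]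

lemma two_pow_xor {t j : ℕ} (hj : j < 2 ^ t) : 2 ^ t ^^^ j = 2 ^ t + j := by
  apply Nat.eq_of_testBit_eq
  intro k
  rcases lt_trichotomy k t with hk | hk | hk
  · rw [Nat.testBit_xor, Nat.testBit_two_pow_of_ne (by omega), testBit_two_pow_add_lt j hk]
    simp
  · subst hk
    rw [Nat.testBit_xor, Nat.testBit_two_pow_self, testBit_two_pow_add_self j hj,
      Nat.testBit_lt_two_pow hj]
    rfl
  · have h1 : 2 ^ t + j < 2 ^ k := by
      have : 2 ^ (t + 1) ≤ 2 ^ k := Nat.pow_le_pow_right (by norm_num) hk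
      have := pow_succ 2 t; omega
    have h2 : j < 2 ^ k := by omega
    rw [Nat.testBit_xor, Nat.testBit_two_pow_of_ne (by omega), Nat.testBit_lt_two_pow h1,
      Nat.testBit_lt_two_pow h2]
    rfl

lemma allones_xor : ∀ t, ∀ i < 2 ^ t, (2 ^ t - 1) ^^^ i = 2 ^ t - 1 - i := by
  intro t
  induction t with
  | zero => intro i hi; interval_cases i <;> rfl
  | succ n ih =>
    intro i hi
    have h2n : 0 < 2 ^ n := by positivity
    have hps : 2 ^ (n + 1) = 2 * 2 ^ n := by rw [pow_succ]; ring
    have hkey : 2 ^ (n + 1) - 1 = 2 ^ n ^^^ (2 ^ n - 1) := by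
      rw [two_pow_xor (Nat.sub_lt h2n Nat.one_pos)]
      omega
    rcases lt_or_ge i (2 ^ n) with h | h
    · rw [hkey, Nat.xor_assoc, ih i h, two_pow_xor (by omega)]
      omega
    · have hi' : i - 2 ^ n < 2 ^ n := by omega
      have : i = 2 ^ n ^^^ (i - 2 ^ n) := by rw [two_pow_xor hi']; omega
      rw [hkey, this]
      have : (2 ^ n ^^^ (2 ^ n - 1)) ^^^ (2 ^ n ^^^ (i - 2 ^ n))
          = (2 ^ n - 1) ^^^ (i - 2 ^ n) := by
        rw [Nat.xor_comm (2 ^ n) (2 ^ n - 1), Nat.xor_assoc, ← Nat.xor_assoc (2 ^ n),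
          Nat.xor_self, Nat.zero_xor]
      rw [this, ih _ hi']
      omega

end S3
namespace S3

/-! ### Dirichlet kernel identities -/

lemma dirichlet_zero (x : G) : dirichlet 0 x = 0 := by simp [dirichlet]

lemma dirichlet_one (x : G) : dirichlet 1 x = 1 := by
  simp [dirichlet, walsh]

lemma dirichlet_two_pow_add {t r : ℕ} (h : r ≤ 2 ^ t) (x : G) :
    dirichlet (2 ^ t + r) x = dirichlet (2 ^ t) x + rad t x * dirichlet r x := by
  unfold dirichlet
  rw [Finset.sum_range_add, Finset.mul_sum]
  congr 1
  refine Finset.sum_congr rfl fun i hi => ?_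
  simp only [Finset.mem_range] at hi
  rw [← two_pow_xor (lt_of_lt_of_le hi h), ← walsh_mul, walsh_two_pow]

lemma dirichlet_two_pow_prod (t : ℕ) (x : G) :
    dirichlet (2 ^ t) x = ∏ i ∈ Finset.range t, (1 + rad i x) := by
  induction t with
  | zero => simpa using dirichlet_one x
  | succ n ih =>
    have : (2 : ℕ) ^ (n + 1) = 2 ^ n + 2 ^ n := by rw [pow_succ]; ring
    rw [this, dirichlet_two_pow_add le_rfl, ih, Finset.prod_range_succ]
    ring

lemma dirichlet_two_pow_nonneg (t : ℕ) (x : G) : 0 ≤ dirichlet (2 ^ t) x := by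
  rw [dirichlet_two_pow_prod]
  refine Finset.prod_nonneg fun i _ => ?_
  rcases rad_eq i x with h | h <;> rw [h] <;> norm_num

lemma dirichlet_rev {t j : ℕ} (hj : j ≤ 2 ^ t) (x : G) :
    dirichlet (2 ^ t - j) x = dirichlet (2 ^ t) x - walsh (2 ^ t - 1) x * dirichlet j x := by
  have h2t : 0 < 2 ^ t := by positivity
  have key : dirichlet (2 ^ t) x - dirichlet (2 ^ t - j) x
      = walsh (2 ^ t - 1) x * dirichlet j x := by
    unfold dirichlet
    rw [← Finset.sum_Ico_eq_sub _ (by omega), Finset.mul_sum,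
      Finset.sum_Ico_eq_sum_range, ← Finset.sum_range_reflect]
    have hco : 2 ^ t - (2 ^ t - j) = j := by omega
    rw [hco]
    refine Finset.sum_congr rfl fun i hi => ?_
    simp only [Finset.mem_range] at hi
    have harg : 2 ^ t - j + (j - 1 - i) = 2 ^ t - 1 - i := by omega
    have hi2 : i < 2 ^ t := lt_of_lt_of_le hi hj
    rw [harg, ← allones_xor t i hi2, ← walsh_mul]
  linarith [key]

/-! ### Sums of Dirichlet kernels -/

/-- `SD q = ∑_{k=1}^q D_k = q K_q`. -/
def SD (q : ℕ) (x : G) : ℝ := ∑ k ∈ Finset.Icc 1 q, dirichlet k x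

lemma SD_zero (x : G) : SD 0 x = 0 := by simp [SD]

lemma SD_one (x : G) : SD 1 x = 1 := by
  simp [SD, dirichlet_one]

lemma SD_succ (q : ℕ) (x : G) : SD (q + 1) x = SD q x + dirichlet (q + 1) x :=
  Finset.sum_Icc_succ_top (by omega) _

lemma fejer_eq_SD (q : ℕ) (x : G) : fejer q x = (q : ℝ)⁻¹ * SD q x := rfl

lemma Icc_eq_Ioc (a : ℕ) : Finset.Icc 1 a = Finset.Ioc 0 a := by
  ext k; simp only [Finset.mem_Icc, Finset.mem_Ioc]; omega

lemma SD_split {a b : ℕ} (h : a ≤ b) (x : G) :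
    SD b x = SD a x + ∑ k ∈ Finset.Ioc a b, dirichlet k x := by
  rw [SD, SD, Icc_eq_Ioc, Icc_eq_Ioc, ← Finset.sum_Ioc_consecutive _ (Nat.zero_le a) h]

lemma Ioc_reindex (a b : ℕ) (f : ℕ → ℝ) :
    ∑ k ∈ Finset.Ioc a (a + b), f k = ∑ l ∈ Finset.Icc 1 b, f (a + l) := by
  have h1 : Finset.Ioc a (a + b) = Finset.Ico (a + 1) (a + b + 1) := by
    ext k; simp only [Finset.mem_Ioc, Finset.mem_Ico]; omega
  have h2 : Finset.Icc 1 b = Finset.Ico 1 (b + 1) := by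
    ext k; simp only [Finset.mem_Icc, Finset.mem_Ico]; omega
  rw [h1, h2, Finset.sum_Ico_eq_sum_range, Finset.sum_Ico_eq_sum_range]
  have h3 : a + b + 1 - (a + 1) = b + 1 - 1 := by omega
  rw [h3]
  refine Finset.sum_congr rfl fun i _ => ?_
  congr 1
  omega

lemma SD_two_pow_add {t r : ℕ} (h : r ≤ 2 ^ t) (x : G) :
    SD (2 ^ t + r) x = SD (2 ^ t) x + r * dirichlet (2 ^ t) x + rad t x * SD r x := by
  rw [SD_split (Nat.le_add_right (2 ^ t) r) x, Ioc_reindex]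
  have : ∑ l ∈ Finset.Icc 1 r, dirichlet (2 ^ t + l) x
      = ∑ l ∈ Finset.Icc 1 r, (dirichlet (2 ^ t) x + rad t x * dirichlet l x) := by
    refine Finset.sum_congr rfl fun l hl => ?_
    simp only [Finset.mem_Icc] at hl
    exact dirichlet_two_pow_add (le_trans hl.2 h) x
  rw [this, Finset.sum_add_distrib, Finset.sum_const, Nat.card_Icc, ← Finset.mul_sum]
  simp only [SD]
  push_cast
  ring

lemma SD_facts (t : ℕ) (x : G) :
    0 ≤ SD (2 ^ t) x ∧ (2 ^ t : ℝ) * dirichlet (2 ^ t) x ≤ 2 * SD (2 ^ t) x := by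
  induction t with
  | zero =>
    constructor
    · simp only [pow_zero, SD_one]; norm_num
    · simp only [pow_zero, SD_one, dirichlet_one]; norm_num
  | succ n ih =>
    obtain ⟨ih1, ih2⟩ := ih
    have hD : 0 ≤ dirichlet (2 ^ n) x := dirichlet_two_pow_nonneg n x
    have hprod : (0:ℝ) ≤ (2 ^ n : ℝ) * dirichlet (2 ^ n) x := by positivity
    have hps : (2 : ℕ) ^ (n + 1) = 2 ^ n + 2 ^ n := by rw [pow_succ]; ring
    have hSD : SD (2 ^ (n + 1)) x
        = SD (2 ^ n) x + (2 ^ n : ℝ) * dirichlet (2 ^ n) x + rad n x * SD (2 ^ n) x := by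
      rw [hps, SD_two_pow_add le_rfl x]; push_cast; ring
    have hDn : dirichlet (2 ^ (n + 1)) x = (1 + rad n x) * dirichlet (2 ^ n) x := by
      rw [hps, dirichlet_two_pow_add le_rfl x]; ring
    have hc2 : ((2 : ℝ) ^ (n + 1)) = 2 * 2 ^ n := by ring
    rcases rad_eq n x with h | h
    · constructor
      · rw [hSD, h]; linarith
      · rw [hSD, hDn, h, hc2]; nlinarith [ih2, hprod]
    · constructor
      · rw [hSD, h]; linarith
      · rw [hSD, hDn, h, hc2]; nlinarith [ih2, hprod]

lemma SD_two_pow_nonneg (t : ℕ) (x : G) : 0 ≤ SD (2 ^ t) x := (SD_facts t x).1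

lemma D_le_SD (t : ℕ) (x : G) : (2 ^ t : ℝ) * dirichlet (2 ^ t) x ≤ 2 * SD (2 ^ t) x :=
  (SD_facts t x).2

/-- Lemma A : `|SD q| ≤ 3 ∑_{i<M} SD (2^i)` whenever `q < 2^M`. -/
lemma lemmaA : ∀ M : ℕ, ∀ q < 2 ^ M, ∀ x : G,
    |SD q x| ≤ 3 * ∑ i ∈ Finset.range M, SD (2 ^ i) x := by
  intro M
  induction M with
  | zero =>
    intro q hq x
    interval_cases q
    simp [SD_zero]
  | succ n ih =>
    intro q hq x
    rw [Finset.sum_range_succ, mul_add]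
    have hnn : 0 ≤ 3 * ∑ i ∈ Finset.range n, SD (2 ^ i) x := by
      have : 0 ≤ ∑ i ∈ Finset.range n, SD (2 ^ i) x :=
        Finset.sum_nonneg fun i _ => SD_two_pow_nonneg i x
      linarith
    have hSDn := SD_two_pow_nonneg n x
    rcases lt_or_ge q (2 ^ n) with h | h
    · calc |SD q x| ≤ 3 * ∑ i ∈ Finset.range n, SD (2 ^ i) x := ih q h x
        _ ≤ _ := by linarith
    · have hr : q - 2 ^ n < 2 ^ n := by
        have : (2 : ℕ) ^ (n + 1) = 2 ^ n + 2 ^ n := by rw [pow_succ]; ring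
        omega
      have hq' : q = 2 ^ n + (q - 2 ^ n) := by omega
      have hrec : SD q x = SD (2 ^ n) x + ((q - 2 ^ n : ℕ) : ℝ) * dirichlet (2 ^ n) x
          + rad n x * SD (q - 2 ^ n) x := by
        conv_lhs => rw [hq']
        exact SD_two_pow_add (by omega) x
      have h1 : |SD (2 ^ n) x| = SD (2 ^ n) x := abs_of_nonneg hSDn
      have hD : 0 ≤ dirichlet (2 ^ n) x := dirichlet_two_pow_nonneg n x
      have h2 : ((q - 2 ^ n : ℕ) : ℝ) * dirichlet (2 ^ n) x ≤ 2 * SD (2 ^ n) x := by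
        calc ((q - 2 ^ n : ℕ) : ℝ) * dirichlet (2 ^ n) x
            ≤ (2 ^ n : ℝ) * dirichlet (2 ^ n) x := by
              apply mul_le_mul_of_nonneg_right _ hD
              have : (q - 2 ^ n : ℕ) ≤ 2 ^ n := by omega
              exact_mod_cast this
          _ ≤ 2 * SD (2 ^ n) x := by
              have := D_le_SD n x; push_cast at this ⊢; linarith
      have h3 : |rad n x * SD (q - 2 ^ n) x| ≤ 3 * ∑ i ∈ Finset.range n, SD (2 ^ i) x := by
        rw [abs_mul]
        have : |rad n x| = 1 := by rcases rad_eq n x with h' | h' <;> rw [h'] <;> norm_num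
        rw [this, one_mul]
        exact ih _ hr x
      calc |SD q x| ≤ SD (2 ^ n) x + ((q - 2 ^ n : ℕ) : ℝ) * dirichlet (2 ^ n) x
            + |rad n x * SD (q - 2 ^ n) x| := by
            rw [hrec]
            refine (abs_add_three _ _ _).trans ?_
            rw [h1, abs_of_nonneg (by positivity)]
      _ ≤ _ := by linarith

end S3
namespace S3

/-! ### Cesàro numbers -/

lemma cesA_zero (β : ℝ) : cesA β 0 = 1 := by simp [cesA]

lemma factorial_cast_succ (n : ℕ) :
    (((n + 1).factorial : ℕ) : ℝ) = ((n : ℝ) + 1) * (n.factorial : ℝ) := by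
  rw [Nat.factorial_succ]; push_cast; ring

lemma cesA_succ (β : ℝ) (n : ℕ) :
    cesA β (n + 1) = cesA β n * ((β + n + 1) / (n + 1)) := by
  have hfac : (n.factorial : ℝ) ≠ 0 := by exact_mod_cast n.factorial_ne_zero
  have hn1 : ((n : ℝ) + 1) ≠ 0 := by positivity
  unfold cesA
  rw [Finset.prod_range_succ, Nat.factorial_succ]
  push_cast
  rw [div_mul_div_comm, div_eq_div_iff (by positivity) (by positivity)]
  ring

lemma cesA_pos {β : ℝ} (hβ : -1 < β) (n : ℕ) : 0 < cesA β n := by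
  unfold cesA
  apply div_pos
  · refine Finset.prod_pos fun i _ => ?_
    have : (0 : ℝ) ≤ i := Nat.cast_nonneg i
    linarith
  · exact_mod_cast n.factorial_pos

lemma cesA_diff (β : ℝ) (n : ℕ) :
    cesA (β - 1) (n + 1) = cesA β (n + 1) - cesA β n := by
  have hfac : (n.factorial : ℝ) ≠ 0 := by exact_mod_cast n.factorial_ne_zero
  have hn1 : ((n : ℝ) + 1) ≠ 0 := by positivity
  have h1 : cesA (β - 1) (n + 1) = cesA β n * (β / (n + 1)) := by
    unfold cesA
    rw [Finset.prod_range_succ', Nat.factorial_succ]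
    have hcongr : ∀ k ∈ Finset.range n, β - 1 + ((k + 1 : ℕ) : ℝ) + 1 = β + k + 1 := by
      intro k _; push_cast; ring
    rw [Finset.prod_congr rfl hcongr]
    push_cast
    rw [div_mul_div_comm, div_eq_div_iff (by positivity) (by positivity)]
    ring
  rw [h1, cesA_succ]
  field_simp
  ring

lemma cesA_sum (β : ℝ) (n : ℕ) :
    ∑ k ∈ Finset.range (n + 1), cesA (β - 1) k = cesA β n := by
  induction n with
  | zero => simp [cesA_zero]
  | succ m ih =>
    rw [Finset.sum_range_succ, ih, cesA_diff]
    ring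

lemma cesA_am1_pos {α : ℝ} (hα0 : 0 < α) (n : ℕ) : 0 < cesA (α - 1) n :=
  cesA_pos (by linarith) n

lemma cesA_a_pos {α : ℝ} (hα0 : 0 < α) (n : ℕ) : 0 < cesA α n :=
  cesA_pos (by linarith) n

lemma cesA_am1_succ_le {α : ℝ} (hα0 : 0 < α) (hα1 : α < 1) (n : ℕ) :
    cesA (α - 1) (n + 1) ≤ cesA (α - 1) n := by
  rw [cesA_succ]
  have h1 : (α - 1 + n + 1) / ((n:ℝ) + 1) ≤ 1 := by
    rw [div_le_one (by positivity)]
    linarith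
  nlinarith [cesA_am1_pos hα0 n]

lemma cesA_am1_anti {α : ℝ} (hα0 : 0 < α) (hα1 : α < 1) {m n : ℕ} (h : m ≤ n) :
    cesA (α - 1) n ≤ cesA (α - 1) m :=
  antitone_nat_of_succ_le (cesA_am1_succ_le hα0 hα1) h

lemma cesA_a_mono {α : ℝ} (hα0 : 0 < α) {m n : ℕ} (h : m ≤ n) :
    cesA α m ≤ cesA α n := by
  refine monotone_nat_of_le_succ (fun k => ?_) h
  rw [cesA_succ]
  have h1 : 1 ≤ (α + k + 1) / ((k:ℝ) + 1) := by
    rw [le_div_iff₀ (by positivity)]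
    linarith
  nlinarith [cesA_a_pos hα0 k]

/-- Bernoulli-type bound: `A_n^{α-1} ≤ (n+1)^{α-1}`. -/
lemma cesA_am1_le_rpow {α : ℝ} (hα0 : 0 < α) (hα1 : α < 1) (n : ℕ) :
    cesA (α - 1) n ≤ ((n + 1 : ℕ) : ℝ) ^ (α - 1) := by
  set β := 1 - α with hβ
  have hβ0 : 0 < β := by rw [hβ]; linarith
  have hβ1 : β ≤ 1 := by rw [hβ]; linarith
  have key : ∀ m : ℕ, cesA (α - 1) m * ((m + 1 : ℕ) : ℝ) ^ β ≤ 1 := by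
    intro m
    induction m with
    | zero => simp [cesA_zero]
    | succ k ih =>
      have hk1 : (0:ℝ) < (k:ℝ) + 1 := by positivity
      have hk2 : (0:ℝ) < (k:ℝ) + 2 := by positivity
      have hsplit : (((k + 1) + 1 : ℕ) : ℝ) ^ β
          = ((k + 1 : ℕ) : ℝ) ^ β * (((k:ℝ) + 2) / ((k:ℝ) + 1)) ^ β := by
        rw [← Real.mul_rpow (by positivity) (by positivity)]
        congr 1
        have e2 : ((k:ℝ)+1) * (((k:ℝ)+2)/((k:ℝ)+1)) = (k:ℝ)+2 := by field_simp
        push_cast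
        rw [e2]
        ring
      have hbern : (((k:ℝ) + 2) / ((k:ℝ) + 1)) ^ β ≤ 1 + β / ((k:ℝ) + 1) := by
        have h0 : ((k:ℝ) + 2) / ((k:ℝ) + 1) = 1 + 1 / ((k:ℝ) + 1) := by
          field_simp
          ring
        rw [h0]
        have hb := rpow_one_add_le_one_add_mul_self
          (s := 1 / ((k:ℝ) + 1)) (by
            have h01 : (0:ℝ) ≤ 1 / ((k:ℝ) + 1) := by positivity
            linarith) (le_of_lt hβ0) hβ1
        calc (1 + 1 / ((k:ℝ) + 1)) ^ β ≤ 1 + β * (1 / ((k:ℝ) + 1)) := hb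
          _ = 1 + β / ((k:ℝ) + 1) := by ring
      have hposA : 0 < cesA (α - 1) k := cesA_am1_pos hα0 k
      have hstep : cesA (α - 1) (k + 1) = cesA (α - 1) k * ((α + k) / ((k:ℝ) + 1)) := by
        rw [cesA_succ]
        congr 1
        ring_nf
      have hαk : (0:ℝ) ≤ α + (k:ℝ) := by
        have hknn : (0:ℝ) ≤ (k:ℝ) := Nat.cast_nonneg k
        linarith
      have hq : 0 ≤ (α + (k:ℝ)) / ((k:ℝ) + 1) := div_nonneg hαk (le_of_lt hk1)
      calc cesA (α - 1) (k + 1) * (((k + 1) + 1 : ℕ) : ℝ) ^ β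
          = (cesA (α - 1) k * ((k + 1 : ℕ) : ℝ) ^ β)
            * (((α + k) / ((k:ℝ) + 1)) * (((k:ℝ) + 2) / ((k:ℝ) + 1)) ^ β) := by
            rw [hstep, hsplit]; ring
        _ ≤ 1 * (((α + k) / ((k:ℝ) + 1)) * (1 + β / ((k:ℝ) + 1))) := by
            exact mul_le_mul ih (mul_le_mul_of_nonneg_left hbern hq)
              (mul_nonneg hq (Real.rpow_nonneg (by positivity) _)) (by norm_num)
        _ ≤ 1 := by
            rw [one_mul]
            have hβα : α + (k:ℝ) = (k:ℝ) + 1 - β := by rw [hβ]; ring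
            have h2 : 1 + β / ((k:ℝ) + 1) = ((k:ℝ) + 1 + β) / ((k:ℝ) + 1) := by field_simp
            rw [hβα, h2, div_mul_div_comm, div_le_one (by positivity)]
            nlinarith [sq_nonneg β]
  have hm := key n
  have hpos : (0:ℝ) < ((n + 1 : ℕ) : ℝ) ^ β := Real.rpow_pos_of_pos (by positivity) β
  have hneg : ((n + 1 : ℕ) : ℝ) ^ (α - 1) = (((n + 1 : ℕ) : ℝ) ^ β)⁻¹ := by
    rw [← Real.rpow_neg (by positivity)]
    congr 1
    rw [hβ]; ring
  rw [hneg, ← mul_le_mul_iff_left₀ hpos, inv_mul_cancel₀ (ne_of_gt hpos)]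
  exact hm

/-- `∑_{k<q} (k+1)^{α-1} ≤ q^α / α`. -/
lemma sum_rpow_le {α : ℝ} (hα0 : 0 < α) (hα1 : α < 1) (q : ℕ) :
    ∑ k ∈ Finset.range q, ((k + 1 : ℕ) : ℝ) ^ (α - 1) ≤ ((q : ℝ) ^ α) / α := by
  induction q with
  | zero =>
    simp [Real.zero_rpow (ne_of_gt hα0)]
  | succ k ih =>
    rw [Finset.sum_range_succ]
    have hk1 : (0:ℝ) < (k:ℝ) + 1 := by positivity
    have hfrac : 1 / ((k:ℝ) + 1) ≤ 1 := by rw [div_le_one hk1]; linarith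
    have hkey : (k : ℝ) ^ α ≤ ((k:ℝ) + 1) ^ α - α * ((k:ℝ) + 1) ^ (α - 1) := by
      have hbern : (1 - 1 / ((k:ℝ) + 1)) ^ α ≤ 1 - α / ((k:ℝ) + 1) := by
        have hb := rpow_one_add_le_one_add_mul_self
          (s := -(1 / ((k:ℝ) + 1))) (by linarith) (le_of_lt hα0) (le_of_lt hα1)
        have e1 : (1:ℝ) + -(1 / ((k:ℝ) + 1)) = 1 - 1 / ((k:ℝ) + 1) := by ring
        rw [e1] at hb
        calc (1 - 1 / ((k:ℝ) + 1)) ^ α ≤ 1 + α * -(1 / ((k:ℝ) + 1)) := hb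
          _ = 1 - α / ((k:ℝ) + 1) := by ring
      have hsplit : (k : ℝ) ^ α = ((k:ℝ) + 1) ^ α * (1 - 1 / ((k:ℝ) + 1)) ^ α := by
        rw [← Real.mul_rpow (by positivity) (by linarith)]
        congr 1
        field_simp
        ring
      have hpow : ((k:ℝ) + 1) ^ α * (1 / ((k:ℝ) + 1)) = ((k:ℝ) + 1) ^ (α - 1) := by
        have hps : ((k:ℝ)+1) ^ (α - 1) = ((k:ℝ)+1) ^ α / ((k:ℝ)+1) ^ (1:ℝ) :=
          Real.rpow_sub hk1 α 1
        rw [Real.rpow_one] at hps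
        rw [mul_one_div, hps]
      have hp : (0:ℝ) ≤ ((k:ℝ) + 1) ^ α := Real.rpow_nonneg (by positivity) α
      calc (k : ℝ) ^ α = ((k:ℝ) + 1) ^ α * (1 - 1 / ((k:ℝ) + 1)) ^ α := hsplit
        _ ≤ ((k:ℝ) + 1) ^ α * (1 - α / ((k:ℝ) + 1)) :=
            mul_le_mul_of_nonneg_left hbern hp
        _ = ((k:ℝ) + 1) ^ α - α * (((k:ℝ) + 1) ^ α * (1 / ((k:ℝ) + 1))) := by ring
        _ = ((k:ℝ) + 1) ^ α - α * ((k:ℝ) + 1) ^ (α - 1) := by rw [hpow]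
    have hlast : ((k + 1 : ℕ) : ℝ) ^ (α - 1) ≤ (((k:ℝ) + 1) ^ α - (k:ℝ) ^ α) / α := by
      rw [le_div_iff₀ hα0]
      push_cast
      nlinarith [hkey]
    calc (∑ i ∈ Finset.range k, ((i + 1 : ℕ) : ℝ) ^ (α - 1)) + ((k + 1 : ℕ) : ℝ) ^ (α - 1)
        ≤ (k : ℝ) ^ α / α + (((k:ℝ) + 1) ^ α - (k:ℝ) ^ α) / α := add_le_add ih hlast
      _ = ((k:ℝ) + 1) ^ α / α := by field_simp; ring
      _ = ((k + 1 : ℕ) : ℝ) ^ α / α := by norm_cast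

lemma cesA_a_le {α : ℝ} (hα0 : 0 < α) (hα1 : α < 1) (n : ℕ) :
    cesA α n ≤ (((n + 1 : ℕ) : ℝ) ^ α) / α := by
  have h1 : cesA α n = ∑ k ∈ Finset.range (n + 1), cesA (α - 1) k := (cesA_sum α n).symm
  rw [h1]
  calc ∑ k ∈ Finset.range (n + 1), cesA (α - 1) k
      ≤ ∑ k ∈ Finset.range (n + 1), ((k + 1 : ℕ) : ℝ) ^ (α - 1) :=
        Finset.sum_le_sum fun k _ => cesA_am1_le_rpow hα0 hα1 k
    _ ≤ (((n + 1 : ℕ) : ℝ) ^ α) / α := by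
        have h2 := sum_rpow_le hα0 hα1 (n + 1)
        push_cast at h2 ⊢
        exact h2

end S3
namespace S3

/-! ### rpow helpers -/

lemma rpow_anti {a b c : ℝ} (ha : 0 < a) (hab : a ≤ b) (hc : c ≤ 0) : b ^ c ≤ a ^ c := by
  have hb : 0 < b := lt_of_lt_of_le ha hab
  have hd : 0 ≤ -c := by linarith
  have h1 : a ^ (-c) ≤ b ^ (-c) := Real.rpow_le_rpow (le_of_lt ha) hab hd
  have ha' : (0:ℝ) < a ^ (-c) := Real.rpow_pos_of_pos ha _
  have e1 : b ^ c = (b ^ (-c))⁻¹ := by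
    rw [← Real.rpow_neg (le_of_lt hb), neg_neg]
  have e2 : a ^ c = (a ^ (-c))⁻¹ := by
    rw [← Real.rpow_neg (le_of_lt ha), neg_neg]
  rw [e1, e2]
  exact inv_anti₀ ha' h1

/-- `gg α i = 2^{i(α-1)}`. -/
def gg (α : ℝ) (i : ℕ) : ℝ := (2:ℝ) ^ ((i:ℝ) * (α - 1))

lemma gg_pos (α : ℝ) (i : ℕ) : 0 < gg α i := Real.rpow_pos_of_pos (by norm_num) _

lemma gg_eq (α : ℝ) (i : ℕ) : gg α i = ((2 ^ i : ℕ) : ℝ) ^ (α - 1) := by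
  unfold gg
  have hcast : ((2 ^ i : ℕ) : ℝ) = (2:ℝ) ^ ((i : ℕ) : ℝ) := by
    rw [Real.rpow_natCast]
    push_cast
    ring
  rw [hcast, ← Real.rpow_mul (by norm_num)]

/-! ### The bookkeeping function ρ -/

def rho (α : ℝ) (i n : ℕ) : ℝ :=
  ∑ t ∈ Finset.Ico i (Nat.log 2 n + 1),
    ((n.testBit t).toNat : ℝ) * ((n % 2 ^ t + 2 ^ i : ℕ) : ℝ) ^ (α - 1)

lemma rho_nonneg (α : ℝ) (i n : ℕ) : 0 ≤ rho α i n := by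
  refine Finset.sum_nonneg fun t _ => ?_
  exact mul_nonneg (by positivity) (Real.rpow_nonneg (by positivity) _)

lemma rho_eq_zero_of_lt {α : ℝ} {i n : ℕ} (h : n < 2 ^ i) : rho α i n = 0 := by
  refine Finset.sum_eq_zero fun t ht => ?_
  simp only [Finset.mem_Ico] at ht
  have : n < 2 ^ t := lt_of_lt_of_le h (Nat.pow_le_pow_right (by norm_num) ht.1)
  rw [Nat.testBit_lt_two_pow this]
  norm_num

lemma testBit_log_self {n : ℕ} (hn : 1 ≤ n) : n.testBit (Nat.log 2 n) = true := by
  have h1 : 2 ^ Nat.log 2 n ≤ n := Nat.pow_log_le_self 2 (by omega)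
  have h2 : n < 2 ^ (Nat.log 2 n + 1) := Nat.lt_pow_succ_log_self (by norm_num) n
  have h3 : n / 2 ^ Nat.log 2 n = 1 := by
    apply Nat.div_eq_of_lt_le
    · omega
    · have : (1 + 1) * 2 ^ Nat.log 2 n = 2 ^ (Nat.log 2 n + 1) := by rw [pow_succ]; ring
      omega
  simp [Nat.testBit_eq_decide_div_mod_eq, h3]

/-- extension of the bit-sum to any cutoff `M` with `m < 2^M`. -/
lemma rho_ext {α : ℝ} (i m M : ℕ) (hM : m < 2 ^ M) :
    ∑ t ∈ Finset.Ico i M,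
      ((m.testBit t).toNat : ℝ) * ((m % 2 ^ t + 2 ^ i : ℕ) : ℝ) ^ (α - 1) = rho α i m := by
  rcases Nat.eq_zero_or_pos m with hm | hm
  · subst hm
    rw [rho_eq_zero_of_lt (by positivity)]
    refine Finset.sum_eq_zero fun t _ => ?_
    simp [Nat.zero_testBit]
  · set L := Nat.log 2 m + 1 with hL
    have hLM : L ≤ M := by
      have := Nat.log_lt_of_lt_pow (by omega : m ≠ 0) hM
      omega
    have hbit0 : ∀ t, L ≤ t → m.testBit t = false := by
      intro t ht
      apply Nat.testBit_lt_two_pow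
      calc m < 2 ^ L := Nat.lt_pow_succ_log_self (by norm_num) m
        _ ≤ 2 ^ t := Nat.pow_le_pow_right (by norm_num) ht
    unfold rho
    rcases le_or_gt i L with hiL | hiL
    · rw [← Finset.sum_Ico_consecutive _ hiL hLM]
      have : ∑ t ∈ Finset.Ico L M,
          ((m.testBit t).toNat : ℝ) * ((m % 2 ^ t + 2 ^ i : ℕ) : ℝ) ^ (α - 1) = 0 := by
        refine Finset.sum_eq_zero fun t ht => ?_
        simp only [Finset.mem_Ico] at ht
        rw [hbit0 t ht.1]
        norm_num
      rw [this, add_zero]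
    · have h1 : Finset.Ico i L = (∅ : Finset ℕ) := Finset.Ico_eq_empty (by omega)
      rw [h1, Finset.sum_empty]
      refine Finset.sum_eq_zero fun t ht => ?_
      simp only [Finset.mem_Ico] at ht
      rw [hbit0 t (by omega)]
      norm_num

lemma rho_rec {α : ℝ} {i n : ℕ} (hn : 1 ≤ n) (hi : i ≤ Nat.log 2 n) :
    rho α i n = ((n % 2 ^ Nat.log 2 n + 2 ^ i : ℕ) : ℝ) ^ (α - 1)
      + rho α i (n % 2 ^ Nat.log 2 n) := by
  have hmN : n % 2 ^ Nat.log 2 n < 2 ^ Nat.log 2 n := Nat.mod_lt _ (by positivity)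
  have hb : n.testBit (Nat.log 2 n) = true := testBit_log_self hn
  have lhs : rho α i n = ∑ t ∈ Finset.Ico i (Nat.log 2 n + 1),
      ((n.testBit t).toNat : ℝ) * ((n % 2 ^ t + 2 ^ i : ℕ) : ℝ) ^ (α - 1) := rfl
  rw [lhs, Finset.sum_Ico_succ_top hi, hb]
  have hsum : ∑ t ∈ Finset.Ico i (Nat.log 2 n),
      ((n.testBit t).toNat : ℝ) * ((n % 2 ^ t + 2 ^ i : ℕ) : ℝ) ^ (α - 1)
      = ∑ t ∈ Finset.Ico i (Nat.log 2 n),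
      (((n % 2 ^ Nat.log 2 n).testBit t).toNat : ℝ)
        * (((n % 2 ^ Nat.log 2 n) % 2 ^ t + 2 ^ i : ℕ) : ℝ) ^ (α - 1) := by
    refine Finset.sum_congr rfl fun t ht => ?_
    simp only [Finset.mem_Ico] at ht
    have hb2 : (n % 2 ^ Nat.log 2 n).testBit t = n.testBit t := by
      rw [Nat.testBit_mod_two_pow]
      simp [ht.2]
    have hmod : (n % 2 ^ Nat.log 2 n) % 2 ^ t = n % 2 ^ t :=
      Nat.mod_mod_of_dvd n (pow_dvd_pow 2 (le_of_lt ht.2))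
    rw [hb2, hmod]
  rw [hsum, rho_ext i _ (Nat.log 2 n) hmN]
  simp only [Bool.toNat_true, Nat.cast_one, one_mul]
  ring

lemma rho_le_aux {α : ℝ} (hα1 : α < 1) :
    ∀ n : ℕ, ∀ i : ℕ, rho α i n ≤ gg α i + ∑ u ∈ Finset.Ico i (Nat.log 2 n), gg α u := by
  intro n
  induction n using Nat.strong_induction_on with
  | _ n ih =>
    intro i
    rcases Nat.eq_zero_or_pos n with hn | hn
    · subst hn
      rw [rho_eq_zero_of_lt (by positivity)]
      refine add_nonneg (le_of_lt (gg_pos α i)) (Finset.sum_nonneg fun u _ => le_of_lt (gg_pos α u))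
    · set N := Nat.log 2 n with hN
      rcases le_or_gt i N with hi | hi
      · set m := n % 2 ^ N with hm
        have hmN : m < 2 ^ N := Nat.mod_lt _ (by positivity)
        have h2N : 2 ^ N ≤ n := Nat.pow_log_le_self 2 (by omega)
        have hmn : m < n := lt_of_lt_of_le hmN h2N
        rw [rho_rec hn hi]
        rcases lt_or_ge m (2 ^ i) with hcase | hcase
        · rw [rho_eq_zero_of_lt hcase, add_zero]
          have h1 : ((m + 2 ^ i : ℕ) : ℝ) ^ (α - 1) ≤ gg α i := by
            rw [gg_eq]
            apply rpow_anti (by positivity) _ (by linarith)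
            have : (2:ℕ) ^ i ≤ m + 2 ^ i := by omega
            exact_mod_cast this
          refine le_trans h1 ?_
          exact le_add_of_nonneg_right (Finset.sum_nonneg fun u _ => le_of_lt (gg_pos α u))
        · have hm1 : 1 ≤ m := le_trans (Nat.one_le_two_pow) hcase
          have hLm : Nat.log 2 m < N := Nat.log_lt_of_lt_pow (by omega) hmN
          have hiLm : i ≤ Nat.log 2 m := (Nat.le_log_iff_pow_le (by norm_num) (by omega)).2 hcase
          have hterm : ((m + 2 ^ i : ℕ) : ℝ) ^ (α - 1) ≤ gg α (Nat.log 2 m) := by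
            rw [gg_eq]
            apply rpow_anti (by positivity) _ (by linarith)
            have h2 : (2:ℕ) ^ Nat.log 2 m ≤ m + 2 ^ i := by
              have hp := Nat.pow_log_le_self 2 (by omega : m ≠ 0)
              have hq : 0 < 2 ^ i := Nat.pow_pos (by norm_num)
              omega
            exact_mod_cast h2
          have hIH := ih m hmn i
          calc ((m + 2 ^ i : ℕ) : ℝ) ^ (α - 1) + rho α i m
              ≤ gg α (Nat.log 2 m) + (gg α i + ∑ u ∈ Finset.Ico i (Nat.log 2 m), gg α u) :=
                add_le_add hterm hIH
            _ = gg α i + (∑ u ∈ Finset.Ico i (Nat.log 2 m), gg α u + gg α (Nat.log 2 m)) := by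
                ring
            _ = gg α i + ∑ u ∈ Finset.Ico i (Nat.log 2 m + 1), gg α u := by
                rw [Finset.sum_Ico_succ_top hiLm]
            _ ≤ gg α i + ∑ u ∈ Finset.Ico i N, gg α u := by
                refine add_le_add_right ?_ _
                refine Finset.sum_le_sum_of_subset_of_nonneg
                  (Finset.Ico_subset_Ico le_rfl (by omega)) fun u _ _ => le_of_lt (gg_pos α u)
      · rw [rho_eq_zero_of_lt]
        · refine add_nonneg (le_of_lt (gg_pos α i))
            (Finset.sum_nonneg fun u _ => le_of_lt (gg_pos α u))
        · calc n < 2 ^ (N + 1) := Nat.lt_pow_succ_log_self (by norm_num) n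
            _ ≤ 2 ^ i := Nat.pow_le_pow_right (by norm_num) (by omega)

lemma geom_bound {α : ℝ} (hα1 : α < 1) (i M : ℕ) :
    ∑ u ∈ Finset.Ico i M, gg α u ≤ gg α i * (1 - (2:ℝ) ^ (α - 1))⁻¹ := by
  set r := (2:ℝ) ^ (α - 1) with hr
  have hr0 : 0 < r := Real.rpow_pos_of_pos (by norm_num) _
  have hr1 : r < 1 := Real.rpow_lt_one_of_one_lt_of_neg (by norm_num) (by linarith)
  have hinv : 0 < (1 - r)⁻¹ := by
    apply inv_pos.2; linarith
  have hgg : ∀ u : ℕ, gg α (i + u) = gg α i * r ^ u := by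
    intro u
    unfold gg
    rw [hr, ← Real.rpow_natCast ((2:ℝ) ^ (α - 1)) u, ← Real.rpow_mul (by norm_num),
      ← Real.rpow_add (by norm_num)]
    congr 1
    push_cast
    ring
  rw [Finset.sum_Ico_eq_sum_range]
  calc ∑ u ∈ Finset.range (M - i), gg α (i + u)
      = gg α i * ∑ u ∈ Finset.range (M - i), r ^ u := by
        rw [Finset.mul_sum]
        exact Finset.sum_congr rfl fun u _ => hgg u
    _ ≤ gg α i * (1 - r)⁻¹ := by
        apply mul_le_mul_of_nonneg_left _ (le_of_lt (gg_pos α i))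
        rw [geom_sum_eq (by intro h; rw [h] at hr1; linarith : r ≠ 1)]
        have h1r : 0 < 1 - r := by linarith
        have hV : 0 < r ^ (M - i) := pow_pos hr0 _
        have e1 : (r ^ (M - i) - 1) / (r - 1) = (1 - r ^ (M - i)) / (1 - r) := by
          rw [← neg_div_neg_eq]
          ring_nf
        rw [e1, ← one_div]
        have h2 : 1 - r ^ (M - i) ≤ 1 := by nlinarith
        gcongr

lemma rho_le {α : ℝ} (hα1 : α < 1) (n i : ℕ) :
    rho α i n ≤ (1 + (1 - (2:ℝ) ^ (α - 1))⁻¹) * gg α i := by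
  calc rho α i n ≤ gg α i + ∑ u ∈ Finset.Ico i (Nat.log 2 n), gg α u := rho_le_aux hα1 n i
    _ ≤ gg α i + gg α i * (1 - (2:ℝ) ^ (α - 1))⁻¹ := by
        exact add_le_add_right (geom_bound hα1 i _) _
    _ = (1 + (1 - (2:ℝ) ^ (α - 1))⁻¹) * gg α i := by ring


end S3
namespace S3

/-! ### Abel summation and interchange -/

lemma abel (b : ℕ → ℝ) (x : G) (J : ℕ) :
    ∑ j ∈ Finset.Icc 1 (J + 1), b j * dirichlet j x
      = b (J + 1) * SD (J + 1) x + ∑ j ∈ Finset.Icc 1 J, (b j - b (j + 1)) * SD j x := by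
  induction J with
  | zero =>
    have h0 : Finset.Icc 1 0 = (∅ : Finset ℕ) := Finset.Icc_eq_empty (by omega)
    have h1 : SD 1 x = dirichlet 1 x := by
      show ∑ k ∈ Finset.Icc 1 1, dirichlet k x = dirichlet 1 x
      rw [Finset.Icc_self, Finset.sum_singleton]
    rw [h0, Finset.sum_empty, Finset.Icc_self, Finset.sum_singleton, h1]
    ring
  | succ k ih =>
    have e1 := Finset.sum_Icc_succ_top (a := 1) (b := k + 1) (by omega)
      (fun j => b j * dirichlet j x)
    have e2 := Finset.sum_Icc_succ_top (a := 1) (b := k) (by omega)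
      (fun j => (b j - b (j + 1)) * SD j x)
    rw [e1, ih, e2, SD_succ (k + 1) x]
    ring

lemma tele (b : ℕ → ℝ) (a c : ℕ) (h : a ≤ c + 1) :
    ∑ j ∈ Finset.Icc a c, (b j - b (j + 1)) = b a - b (c + 1) := by
  rw [← Finset.Ico_add_one_right_eq_Icc, Finset.sum_Ico_eq_sum_range]
  have h2 : a + (c + 1 - a) = c + 1 := by omega
  calc ∑ k ∈ Finset.range (c + 1 - a), (b (a + k) - b (a + k + 1))
      = (fun k => b (a + k)) 0 - (fun k => b (a + k)) (c + 1 - a) :=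
        Finset.sum_range_sub' (fun k => b (a + k)) (c + 1 - a)
    _ = b a - b (c + 1) := by simp only [Nat.add_zero, h2]

lemma interchange (x : G) (b : ℕ → ℝ) (hbpos : ∀ j, 0 < b j) (hbdec : ∀ j, b (j + 1) ≤ b j)
    (N P : ℕ) (hP : P < 2 ^ N) :
    ∑ j ∈ Finset.Icc 1 P, (b j - b (j + 1)) * |SD j x|
      ≤ 3 * ∑ i ∈ Finset.range N, b (2 ^ i) * SD (2 ^ i) x := by
  have hΦ : ∀ i : ℕ, 0 ≤ SD (2 ^ i) x := fun i => SD_two_pow_nonneg i x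
  have step1 : ∀ j ∈ Finset.Icc 1 P,
      |SD j x| ≤ 3 * ∑ i ∈ Finset.range N, (if 2 ^ i ≤ j then SD (2 ^ i) x else 0) := by
    intro j hj
    simp only [Finset.mem_Icc] at hj
    have hjN : j < 2 ^ N := lt_of_le_of_lt hj.2 hP
    have hlog : Nat.log 2 j + 1 ≤ N := by
      have := Nat.log_lt_of_lt_pow (by omega : j ≠ 0) hjN
      omega
    have hfil : (Finset.range N).filter (fun i => 2 ^ i ≤ j) = Finset.range (Nat.log 2 j + 1) := by
      ext i
      simp only [Finset.mem_filter, Finset.mem_range]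
      constructor
      · rintro ⟨hiN, hij⟩
        have := (Nat.le_log_iff_pow_le (by norm_num) (by omega : j ≠ 0)).2 hij
        omega
      · intro hi
        have h1 : i ≤ Nat.log 2 j := by omega
        exact ⟨by omega, (Nat.le_log_iff_pow_le (by norm_num) (by omega : j ≠ 0)).1 h1⟩
    rw [← Finset.sum_filter, hfil]
    exact lemmaA _ j (Nat.lt_pow_succ_log_self (by norm_num) j) x
  have hcoef : ∀ j : ℕ, 0 ≤ b j - b (j + 1) := fun j => by linarith [hbdec j]
  have hper : ∀ j : ℕ, (b j - b (j + 1))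
        * (3 * ∑ i ∈ Finset.range N, (if 2 ^ i ≤ j then SD (2 ^ i) x else 0))
      = ∑ i ∈ Finset.range N, (if 2 ^ i ≤ j then 3 * ((b j - b (j + 1)) * SD (2 ^ i) x) else 0) := by
    intro j
    rw [Finset.mul_sum, Finset.mul_sum]
    refine Finset.sum_congr rfl fun i _ => ?_
    rcases le_or_gt (2 ^ i) j with h | h
    · simp only [if_pos h]; ring
    · simp only [if_neg (not_le.2 h)]; ring
  calc ∑ j ∈ Finset.Icc 1 P, (b j - b (j + 1)) * |SD j x|
      ≤ ∑ j ∈ Finset.Icc 1 P, (b j - b (j + 1))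
          * (3 * ∑ i ∈ Finset.range N, (if 2 ^ i ≤ j then SD (2 ^ i) x else 0)) := by
        refine Finset.sum_le_sum fun j hj => ?_
        exact mul_le_mul_of_nonneg_left (step1 j hj) (hcoef j)
    _ = ∑ i ∈ Finset.range N, ∑ j ∈ Finset.Icc 1 P,
          (if 2 ^ i ≤ j then 3 * ((b j - b (j + 1)) * SD (2 ^ i) x) else 0) := by
        rw [← Finset.sum_comm]
        exact Finset.sum_congr rfl fun j _ => hper j
    _ ≤ ∑ i ∈ Finset.range N, 3 * (b (2 ^ i) * SD (2 ^ i) x) := by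
        refine Finset.sum_le_sum fun i _ => ?_
        have hone : (1:ℕ) ≤ 2 ^ i := Nat.one_le_two_pow
        have hfil2 : (Finset.Icc 1 P).filter (fun j => 2 ^ i ≤ j) = Finset.Icc (2 ^ i) P := by
          ext j
          simp only [Finset.mem_filter, Finset.mem_Icc]
          omega
        rw [← Finset.sum_filter, hfil2]
        have e3 : ∑ j ∈ Finset.Icc (2 ^ i) P, 3 * ((b j - b (j + 1)) * SD (2 ^ i) x)
            = 3 * ((∑ j ∈ Finset.Icc (2 ^ i) P, (b j - b (j + 1))) * SD (2 ^ i) x) := by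
          rw [Finset.sum_mul, Finset.mul_sum]
        rw [e3]
        have h3 : (0:ℝ) ≤ 3 := by norm_num
        refine mul_le_mul_of_nonneg_left ?_ h3
        rcases le_or_gt (2 ^ i) (P + 1) with h | h
        · rw [tele b _ _ h]
          have := hbpos (P + 1)
          have hb2 : b (2 ^ i) - b (P + 1) ≤ b (2 ^ i) := by linarith
          exact mul_le_mul_of_nonneg_right hb2 (hΦ i)
        · have hemp : Finset.Icc (2 ^ i) P = (∅ : Finset ℕ) := Finset.Icc_eq_empty (by omega)
          rw [hemp, Finset.sum_empty, zero_mul]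
          exact mul_nonneg (le_of_lt (hbpos _)) (hΦ i)
    _ = 3 * ∑ i ∈ Finset.range N, b (2 ^ i) * SD (2 ^ i) x := by
        rw [Finset.mul_sum]

end S3
namespace S3

/-! ### The main kernel sum -/

def Tc (α : ℝ) (n : ℕ) (x : G) : ℝ :=
  ∑ k ∈ Finset.Icc 1 n, cesA (α - 1) (n - k) * dirichlet k x

lemma cesKernel_eq_Tc (α : ℝ) (n : ℕ) (x : G) :
    cesKernel α n x = (cesA α n)⁻¹ * Tc α n x := rfl

lemma Tc_zero (α : ℝ) (x : G) : Tc α 0 x = 0 := by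
  unfold Tc
  rw [Finset.Icc_eq_empty (by omega), Finset.sum_empty]

lemma Tc_one (α : ℝ) (x : G) : Tc α 1 x = 1 := by
  unfold Tc
  rw [Finset.Icc_self, Finset.sum_singleton, dirichlet_one]
  norm_num [cesA_zero]

lemma sum_Icc_rev (f : ℕ → ℝ) (m : ℕ) :
    ∑ l ∈ Finset.Icc 1 m, f (m - l) = ∑ q ∈ Finset.range m, f q := by
  rw [← Finset.Ico_add_one_right_eq_Icc, Finset.sum_Ico_eq_sum_range]
  have h1 : m + 1 - 1 = m := by omega
  rw [h1, ← Finset.sum_range_reflect]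
  refine Finset.sum_congr rfl fun k hk => ?_
  simp only [Finset.mem_range] at hk
  congr 1
  omega

lemma sum_Icc_rev' (g : ℕ → ℝ) (M : ℕ) :
    ∑ k ∈ Finset.Icc 1 M, g k = ∑ j ∈ Finset.range M, g (M - j) := by
  rw [← sum_Icc_rev (fun q => g (M - q)) M]
  refine Finset.sum_congr rfl fun l hl => ?_
  simp only [Finset.mem_Icc] at hl
  congr 1
  omega

lemma cast_two_pow (k : ℕ) : ((2 ^ k : ℕ) : ℝ) = (2:ℝ) ^ ((k : ℕ) : ℝ) := by
  rw [Real.rpow_natCast]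
  push_cast
  ring

/-- The key pointwise estimate. -/
lemma key {α : ℝ} (hα0 : 0 < α) (hα1 : α < 1) :
    ∀ n : ℕ, 1 ≤ n → ∀ x : G, |Tc α n x| ≤
      ∑ i ∈ Finset.range (Nat.log 2 n + 1),
        ((8 / α) * gg α i + 6 * rho α i n) * SD (2 ^ i) x := by
  intro n
  induction n using Nat.strong_induction_on with
  | _ n ih =>
    intro hn x
    rcases lt_or_ge n 2 with hn2 | hn2
    · -- base case n = 1
      have hn1 : n = 1 := by omega
      subst hn1
      have hlog : Nat.log 2 1 = 0 := Nat.log_one_right 2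
      rw [hlog, Tc_one]
      rw [Finset.range_one, Finset.sum_singleton]
      have hgg0 : gg α 0 = 1 := by
        unfold gg
        rw [Nat.cast_zero, zero_mul, Real.rpow_zero]
      have hSD1 : SD (2 ^ 0) x = 1 := by rw [pow_zero, SD_one]
      rw [hgg0, hSD1, mul_one, mul_one]
      have h8 : (8:ℝ) ≤ 8 / α := by
        rw [le_div_iff₀ hα0]
        nlinarith
      have hρ : 0 ≤ rho α 0 1 := rho_nonneg α 0 1
      rw [abs_one]
      linarith
    · -- inductive case n ≥ 2
      set N := Nat.log 2 n with hN
      have hN1 : 1 ≤ N := by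
        rw [hN]
        exact (Nat.le_log_iff_pow_le (by norm_num) (by omega)).2 (by omega : (2:ℕ)^1 ≤ n)
      have h2N : 2 ^ N ≤ n := Nat.pow_log_le_self 2 (by omega)
      have hn2N1 : n < 2 ^ (N + 1) := Nat.lt_pow_succ_log_self (by norm_num) n
      have hpow1 : (2:ℕ) ^ (N + 1) = 2 ^ N * 2 := pow_succ 2 N
      have h2Npos : 0 < (2:ℕ) ^ N := by positivity
      have h2N2 : 2 ≤ (2:ℕ) ^ N := by
        calc (2:ℕ) = 2 ^ 1 := by norm_num
          _ ≤ 2 ^ N := Nat.pow_le_pow_right (by norm_num) hN1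
      have hdiv : n / 2 ^ N = 1 := Nat.div_eq_of_lt_le (by omega) (by omega)
      have hmeq : n = 2 ^ N + n % 2 ^ N := by
        conv_lhs => rw [← Nat.div_add_mod n (2 ^ N)]
        rw [hdiv, mul_one]
      set m := n % 2 ^ N with hmdef
      have hmlt : m < 2 ^ N := Nat.mod_lt _ h2Npos
      have hmn : m < n := by omega
      have hΦ : ∀ i : ℕ, 0 ≤ SD (2 ^ i) x := fun i => SD_two_pow_nonneg i x
      have hDN : 0 ≤ dirichlet (2 ^ N) x := dirichlet_two_pow_nonneg N x
      set b : ℕ → ℝ := fun j => cesA (α - 1) (m + j) with hb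
      have hbpos : ∀ j, 0 < b j := fun j => cesA_am1_pos hα0 _
      have hbdec : ∀ j, b (j + 1) ≤ b j := by
        intro j
        show cesA (α - 1) (m + (j + 1)) ≤ cesA (α - 1) (m + j)
        exact cesA_am1_succ_le hα0 hα1 (m + j)
      set cD : ℝ := ∑ j ∈ Finset.range (2 ^ N), b j with hcD
      set sm : ℝ := ∑ q ∈ Finset.range m, cesA (α - 1) q with hsm
      set V : ℝ := ∑ j ∈ Finset.range (2 ^ N), b j * dirichlet j x with hV
      -- part 1 identity
      have hpart1 : ∑ k ∈ Finset.Icc 1 (2 ^ N), cesA (α - 1) (n - k) * dirichlet k x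
          = cD * dirichlet (2 ^ N) x - walsh (2 ^ N - 1) x * V := by
        rw [sum_Icc_rev' (fun k => cesA (α - 1) (n - k) * dirichlet k x) (2 ^ N)]
        have e1 : ∀ j ∈ Finset.range (2 ^ N),
            cesA (α - 1) (n - (2 ^ N - j)) * dirichlet (2 ^ N - j) x
            = b j * dirichlet (2 ^ N) x - b j * (walsh (2 ^ N - 1) x * dirichlet j x) := by
          intro j hj
          simp only [Finset.mem_range] at hj
          have hnj : n - (2 ^ N - j) = m + j := by omega
          simp only [hb]
          rw [hnj, dirichlet_rev (le_of_lt hj) x]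
          ring
        rw [Finset.sum_congr rfl e1, Finset.sum_sub_distrib, ← Finset.sum_mul]
        rw [hcD]
        congr 1
        rw [hV, Finset.mul_sum]
        exact Finset.sum_congr rfl fun j _ => by ring
      -- part 2 identity
      have hpart2 : ∑ k ∈ Finset.Ioc (2 ^ N) n, cesA (α - 1) (n - k) * dirichlet k x
          = sm * dirichlet (2 ^ N) x + rad N x * Tc α m x := by
        have e0 : Finset.Ioc (2 ^ N) n = Finset.Ioc (2 ^ N) (2 ^ N + m) := by
          congr 1
        rw [e0, Ioc_reindex (2 ^ N) m (fun k => cesA (α - 1) (n - k) * dirichlet k x)]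
        have e1 : ∀ l ∈ Finset.Icc 1 m,
            cesA (α - 1) (n - (2 ^ N + l)) * dirichlet (2 ^ N + l) x
            = cesA (α - 1) (m - l) * dirichlet (2 ^ N) x
              + rad N x * (cesA (α - 1) (m - l) * dirichlet l x) := by
          intro l hl
          simp only [Finset.mem_Icc] at hl
          have hnl : n - (2 ^ N + l) = m - l := by omega
          rw [hnl, dirichlet_two_pow_add (by omega : l ≤ 2 ^ N) x]
          ring
        rw [Finset.sum_congr rfl e1, Finset.sum_add_distrib, ← Finset.sum_mul, ← Finset.mul_sum]
        rw [sum_Icc_rev (fun q => cesA (α - 1) q) m, hsm]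
        rfl
      -- split
      have hsplitTc : Tc α n x
          = (∑ k ∈ Finset.Icc 1 (2 ^ N), cesA (α - 1) (n - k) * dirichlet k x)
            + ∑ k ∈ Finset.Ioc (2 ^ N) n, cesA (α - 1) (n - k) * dirichlet k x := by
        show (∑ k ∈ Finset.Icc 1 n, cesA (α - 1) (n - k) * dirichlet k x) = _
        rw [Icc_eq_Ioc, Icc_eq_Ioc,
          ← Finset.sum_Ioc_consecutive _ (Nat.zero_le (2 ^ N)) h2N]
      -- bound on V
      have hVbound : |V| ≤ 6 * ∑ i ∈ Finset.range N, b (2 ^ i) * SD (2 ^ i) x := by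
        have hdrop : V = ∑ j ∈ Finset.Icc 1 (2 ^ N - 1), b j * dirichlet j x := by
          rw [hV, Finset.range_eq_Ico, Finset.sum_eq_sum_Ico_succ_bot h2Npos]
          rw [dirichlet_zero, mul_zero, zero_add]
          congr 1
        have habel := abel b x (2 ^ N - 2)
        have he : (2:ℕ) ^ N - 2 + 1 = 2 ^ N - 1 := by omega
        rw [he] at habel
        rw [hdrop, habel]
        have hb1 : |b (2 ^ N - 1) * SD (2 ^ N - 1) x|
            ≤ 3 * ∑ i ∈ Finset.range N, b (2 ^ N - 1) * SD (2 ^ i) x := by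
          rw [abs_mul, abs_of_pos (hbpos _)]
          have hA := lemmaA N (2 ^ N - 1) (by omega) x
          calc b (2 ^ N - 1) * |SD (2 ^ N - 1) x|
              ≤ b (2 ^ N - 1) * (3 * ∑ i ∈ Finset.range N, SD (2 ^ i) x) :=
                mul_le_mul_of_nonneg_left hA (le_of_lt (hbpos _))
            _ = 3 * ∑ i ∈ Finset.range N, b (2 ^ N - 1) * SD (2 ^ i) x := by
                rw [Finset.mul_sum, Finset.mul_sum, Finset.mul_sum]
                exact Finset.sum_congr rfl fun i _ => by ring
        have hb2 : |∑ j ∈ Finset.Icc 1 (2 ^ N - 2), (b j - b (j + 1)) * SD j x|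
            ≤ 3 * ∑ i ∈ Finset.range N, b (2 ^ i) * SD (2 ^ i) x := by
          calc |∑ j ∈ Finset.Icc 1 (2 ^ N - 2), (b j - b (j + 1)) * SD j x|
              ≤ ∑ j ∈ Finset.Icc 1 (2 ^ N - 2), |(b j - b (j + 1)) * SD j x| :=
                Finset.abs_sum_le_sum_abs _ _
            _ = ∑ j ∈ Finset.Icc 1 (2 ^ N - 2), (b j - b (j + 1)) * |SD j x| := by
                refine Finset.sum_congr rfl fun j _ => ?_
                rw [abs_mul, abs_of_nonneg (by linarith [hbdec j] : (0:ℝ) ≤ b j - b (j + 1))]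
            _ ≤ _ := interchange x b hbpos hbdec N (2 ^ N - 2) (by omega)
        have hmono : ∑ i ∈ Finset.range N, b (2 ^ N - 1) * SD (2 ^ i) x
            ≤ ∑ i ∈ Finset.range N, b (2 ^ i) * SD (2 ^ i) x := by
          refine Finset.sum_le_sum fun i hi => ?_
          simp only [Finset.mem_range] at hi
          refine mul_le_mul_of_nonneg_right ?_ (hΦ i)
          show cesA (α - 1) (m + (2 ^ N - 1)) ≤ cesA (α - 1) (m + 2 ^ i)
          apply cesA_am1_anti hα0 hα1
          have : (2:ℕ) ^ i < 2 ^ N := Nat.pow_lt_pow_right (by norm_num) hi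
          omega
        calc |b (2 ^ N - 1) * SD (2 ^ N - 1) x
              + ∑ j ∈ Finset.Icc 1 (2 ^ N - 2), (b j - b (j + 1)) * SD j x|
            ≤ |b (2 ^ N - 1) * SD (2 ^ N - 1) x|
              + |∑ j ∈ Finset.Icc 1 (2 ^ N - 2), (b j - b (j + 1)) * SD j x| := abs_add_le _ _
          _ ≤ 3 * ∑ i ∈ Finset.range N, b (2 ^ N - 1) * SD (2 ^ i) x
              + 3 * ∑ i ∈ Finset.range N, b (2 ^ i) * SD (2 ^ i) x := add_le_add hb1 hb2
          _ ≤ 6 * ∑ i ∈ Finset.range N, b (2 ^ i) * SD (2 ^ i) x := by linarith [hmono]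
      -- coefficient bounds
      have hsumn : cesA α (n - 1) = ∑ q ∈ Finset.range n, cesA (α - 1) q := by
        rw [show n = (n - 1) + 1 by omega, cesA_sum]
        congr 1
      have hcDle : cD ≤ cesA α (n - 1) := by
        have e1 : cD = ∑ q ∈ Finset.Ico m (m + 2 ^ N), cesA (α - 1) q := by
          rw [hcD, Finset.sum_Ico_eq_sum_range]
          rw [show m + 2 ^ N - m = 2 ^ N by omega]
        rw [e1, hsumn]
        refine Finset.sum_le_sum_of_subset_of_nonneg ?_
          (fun q _ _ => le_of_lt (cesA_am1_pos hα0 q))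
        intro q hq
        simp only [Finset.mem_Ico, Finset.mem_range] at hq ⊢
        omega
      have hsmle : sm ≤ cesA α (n - 1) := by
        rw [hsm, hsumn]
        refine Finset.sum_le_sum_of_subset_of_nonneg ?_
          (fun q _ _ => le_of_lt (cesA_am1_pos hα0 q))
        exact Finset.range_subset_range.2 (by omega)
      have hsm0 : 0 ≤ sm :=
        Finset.sum_nonneg fun q _ => le_of_lt (cesA_am1_pos hα0 q)
      have hcD0 : 0 ≤ cD :=
        Finset.sum_nonneg fun j _ => le_of_lt (hbpos j)
      have h5 : (0:ℝ) < (2:ℝ) ^ ((N:ℝ) * α) := Real.rpow_pos_of_pos (by norm_num) _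
      have hAbound : cesA α (n - 1) ≤ (2 / α) * (2:ℝ) ^ ((N:ℝ) * α) := by
        have h1 : cesA α (n - 1) ≤ ((n : ℝ) ^ α) / α := by
          have h0 := cesA_a_le hα0 hα1 (n - 1)
          have e : ((n - 1 + 1 : ℕ) : ℝ) = (n : ℝ) := by
            rw [show n - 1 + 1 = n by omega]
          rwa [e] at h0
        have h2 : ((n : ℝ) ^ α) ≤ ((2:ℝ) ^ (((N:ℝ) + 1))) ^ α := by
          apply Real.rpow_le_rpow (by positivity) _ (le_of_lt hα0)
          have hc : ((n:ℕ):ℝ) ≤ ((2 ^ (N + 1) : ℕ) : ℝ) := by exact_mod_cast le_of_lt hn2N1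
          rw [cast_two_pow] at hc
          convert hc using 2
          push_cast
          ring
        have h3 : ((2:ℝ) ^ (((N:ℝ) + 1))) ^ α = (2:ℝ) ^ α * (2:ℝ) ^ ((N:ℝ) * α) := by
          rw [← Real.rpow_mul (by norm_num), ← Real.rpow_add (by norm_num)]
          congr 1
          ring
        have h4 : (2:ℝ) ^ α ≤ 2 := by
          calc (2:ℝ) ^ α ≤ (2:ℝ) ^ (1:ℝ) :=
              Real.rpow_le_rpow_of_exponent_le (by norm_num) (le_of_lt hα1)
            _ = 2 := Real.rpow_one 2
        have h6 : (n : ℝ) ^ α ≤ 2 * (2:ℝ) ^ ((N:ℝ) * α) := by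
          calc (n : ℝ) ^ α ≤ ((2:ℝ) ^ (((N:ℝ) + 1))) ^ α := h2
            _ = (2:ℝ) ^ α * (2:ℝ) ^ ((N:ℝ) * α) := h3
            _ ≤ 2 * (2:ℝ) ^ ((N:ℝ) * α) := mul_le_mul_of_nonneg_right h4 (le_of_lt h5)
        calc cesA α (n - 1) ≤ ((n : ℝ) ^ α) / α := h1
          _ ≤ (2 * (2:ℝ) ^ ((N:ℝ) * α)) / α := by
              rw [div_le_div_iff₀ hα0 hα0]
              nlinarith [h6, le_of_lt hα0]
          _ = (2 / α) * (2:ℝ) ^ ((N:ℝ) * α) := by ring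
      have hDterm : (cD + sm) * dirichlet (2 ^ N) x
          ≤ (8 / α) * gg α N * SD (2 ^ N) x := by
        have hgN : gg α N = (2:ℝ) ^ ((N:ℝ) * α) / (2:ℝ) ^ (N : ℕ) := by
          unfold gg
          rw [← Real.rpow_natCast (2:ℝ) N, ← Real.rpow_sub (by norm_num)]
          congr 1
          ring
        have hDS := D_le_SD N x
        have h2Nr : (0:ℝ) < (2:ℝ) ^ (N:ℕ) := by positivity
        have hcs : cD + sm ≤ (4 / α) * (2:ℝ) ^ ((N:ℝ) * α) := by
          calc cD + sm ≤ 2 * cesA α (n - 1) := by linarith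
            _ ≤ 2 * ((2 / α) * (2:ℝ) ^ ((N:ℝ) * α)) := by linarith
            _ = (4 / α) * (2:ℝ) ^ ((N:ℝ) * α) := by ring
        have hD2 : dirichlet (2 ^ N) x ≤ 2 * SD (2 ^ N) x / (2:ℝ) ^ (N:ℕ) := by
          rw [le_div_iff₀ h2Nr, mul_comm]
          exact hDS
        calc (cD + sm) * dirichlet (2 ^ N) x
            ≤ ((4 / α) * (2:ℝ) ^ ((N:ℝ) * α)) * dirichlet (2 ^ N) x :=
              mul_le_mul_of_nonneg_right hcs hDN
          _ = (4 / α) * ((2:ℝ) ^ ((N:ℝ) * α) * dirichlet (2 ^ N) x) := by ring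
          _ ≤ (4 / α) * ((2:ℝ) ^ ((N:ℝ) * α) * (2 * SD (2 ^ N) x / (2:ℝ) ^ (N:ℕ))) := by
              refine mul_le_mul_of_nonneg_left ?_ (by positivity)
              exact mul_le_mul_of_nonneg_left hD2 (le_of_lt h5)
          _ = (8 / α) * ((2:ℝ) ^ ((N:ℝ) * α) / (2:ℝ) ^ (N:ℕ)) * SD (2 ^ N) x := by ring
          _ = (8 / α) * gg α N * SD (2 ^ N) x := by rw [hgN]
      -- IH term
      have hTcm : |Tc α m x|
          ≤ ∑ i ∈ Finset.range N, ((8 / α) * gg α i + 6 * rho α i m) * SD (2 ^ i) x := by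
        have hterm_nonneg : ∀ i, 0 ≤ ((8 / α) * gg α i + 6 * rho α i m) * SD (2 ^ i) x := by
          intro i
          refine mul_nonneg (add_nonneg ?_ ?_) (hΦ i)
          · exact mul_nonneg (by positivity) (le_of_lt (gg_pos α i))
          · exact mul_nonneg (by norm_num) (rho_nonneg α i m)
        rcases Nat.eq_zero_or_pos m with hm0 | hm1
        · rw [hm0]
          rw [Tc_zero, abs_zero]
          exact Finset.sum_nonneg fun i _ => by
            have := hterm_nonneg i
            rwa [hm0] at this
        · have hIH := ih m hmn hm1 x
          refine le_trans hIH ?_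
          refine Finset.sum_le_sum_of_subset_of_nonneg ?_ (fun i _ _ => hterm_nonneg i)
          apply Finset.range_subset_range.2
          have : Nat.log 2 m < N := Nat.log_lt_of_lt_pow (by omega) hmlt
          omega
      -- rho recursion
      have hcesA_rho : ∀ i, i < N → b (2 ^ i) + rho α i m ≤ rho α i n := by
        intro i hi
        have hrec := rho_rec (α := α) (n := n) (i := i) (by omega) (by rw [← hN]; omega)
        rw [← hN, ← hmdef] at hrec
        have hble : b (2 ^ i) ≤ ((m + 2 ^ i : ℕ) : ℝ) ^ (α - 1) := by
          have hc1 : cesA (α - 1) (m + 2 ^ i) ≤ ((m + 2 ^ i + 1 : ℕ) : ℝ) ^ (α - 1) :=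
            cesA_am1_le_rpow hα0 hα1 (m + 2 ^ i)
          have hc2 : ((m + 2 ^ i + 1 : ℕ) : ℝ) ^ (α - 1) ≤ ((m + 2 ^ i : ℕ) : ℝ) ^ (α - 1) := by
            apply rpow_anti _ _ (by linarith)
            · have h1n : 0 < m + 2 ^ i := by
                have := Nat.one_le_two_pow (n := i)
                omega
              exact_mod_cast h1n
            · exact_mod_cast Nat.le_succ (m + 2 ^ i)
          exact le_trans hc1 hc2
        rw [hrec]
        linarith
      -- final assembly
      rw [hsplitTc, hpart1, hpart2]
      have habs : |cD * dirichlet (2 ^ N) x - walsh (2 ^ N - 1) x * V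
            + (sm * dirichlet (2 ^ N) x + rad N x * Tc α m x)|
          ≤ (cD + sm) * dirichlet (2 ^ N) x + |V| + |Tc α m x| := by
        have h1 : |walsh (2 ^ N - 1) x * V| = |V| := by
          rw [abs_mul, abs_walsh, one_mul]
        have h2 : |rad N x * Tc α m x| = |Tc α m x| := by
          rw [abs_mul]
          have : |rad N x| = 1 := by
            rcases rad_eq N x with h | h <;> rw [h] <;> norm_num
          rw [this, one_mul]
        have h3 : |cD * dirichlet (2 ^ N) x| = cD * dirichlet (2 ^ N) x :=
          abs_of_nonneg (mul_nonneg hcD0 hDN)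
        have h4 : |sm * dirichlet (2 ^ N) x| = sm * dirichlet (2 ^ N) x :=
          abs_of_nonneg (mul_nonneg hsm0 hDN)
        calc |cD * dirichlet (2 ^ N) x - walsh (2 ^ N - 1) x * V
              + (sm * dirichlet (2 ^ N) x + rad N x * Tc α m x)|
            ≤ |cD * dirichlet (2 ^ N) x - walsh (2 ^ N - 1) x * V|
              + |sm * dirichlet (2 ^ N) x + rad N x * Tc α m x| := abs_add_le _ _
          _ ≤ (|cD * dirichlet (2 ^ N) x| + |walsh (2 ^ N - 1) x * V|)
              + (|sm * dirichlet (2 ^ N) x| + |rad N x * Tc α m x|) := by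
              refine add_le_add ?_ (abs_add_le _ _)
              calc |cD * dirichlet (2 ^ N) x - walsh (2 ^ N - 1) x * V|
                  = |cD * dirichlet (2 ^ N) x + -(walsh (2 ^ N - 1) x * V)| := by
                    rw [sub_eq_add_neg]
                _ ≤ |cD * dirichlet (2 ^ N) x| + |-(walsh (2 ^ N - 1) x * V)| := abs_add_le _ _
                _ = |cD * dirichlet (2 ^ N) x| + |walsh (2 ^ N - 1) x * V| := by rw [abs_neg]
          _ = (cD + sm) * dirichlet (2 ^ N) x + |V| + |Tc α m x| := by
              rw [h1, h2, h3, h4]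
              ring
      refine le_trans habs ?_
      rw [Finset.sum_range_succ]
      have hGN : (8 / α) * gg α N * SD (2 ^ N) x
          ≤ ((8 / α) * gg α N + 6 * rho α N n) * SD (2 ^ N) x := by
        refine mul_le_mul_of_nonneg_right ?_ (hΦ N)
        have := rho_nonneg α N n
        linarith
      have hrest : 6 * (∑ i ∈ Finset.range N, b (2 ^ i) * SD (2 ^ i) x)
            + ∑ i ∈ Finset.range N, ((8 / α) * gg α i + 6 * rho α i m) * SD (2 ^ i) x
          ≤ ∑ i ∈ Finset.range N, ((8 / α) * gg α i + 6 * rho α i n) * SD (2 ^ i) x := by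
        rw [Finset.mul_sum, ← Finset.sum_add_distrib]
        refine Finset.sum_le_sum fun i hi => ?_
        simp only [Finset.mem_range] at hi
        have hkey2 := hcesA_rho i hi
        have hφ := hΦ i
        have e : 6 * (b (2 ^ i) * SD (2 ^ i) x)
              + ((8 / α) * gg α i + 6 * rho α i m) * SD (2 ^ i) x
            = (6 * b (2 ^ i) + ((8 / α) * gg α i + 6 * rho α i m)) * SD (2 ^ i) x := by ring
        rw [e]
        refine mul_le_mul_of_nonneg_right ?_ hφ
        linarith
      linarith [hVbound, hTcm, hDterm, hGN, hrest]

end S3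

/-- kernel estimate
`|K_n^α| ≤ (c_α / A_{n-1}^α) ∑_{j=0}^{|n|} 2^{jα} K_{2^j}`, where `2^{|n|} ≤ n < 2^{|n|+1}`. -/
theorem statement3 (α : ℝ) (hα0 : 0 < α) (hα1 : α < 1) :
    ∃ c : ℝ, 0 < c ∧ ∀ n : ℕ, 1 ≤ n → ∀ x : G,
      |cesKernel α n x| ≤ c / cesA α (n - 1) *
        ∑ j ∈ Finset.range (Nat.log 2 n + 1), (2 : ℝ) ^ ((j : ℝ) * α) * fejer (2 ^ j) x := by
  classical
  set r : ℝ := (2:ℝ) ^ (α - 1) with hr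
  have hr1 : r < 1 := Real.rpow_lt_one_of_one_lt_of_neg (by norm_num) (by linarith)
  have hr0 : 0 < r := Real.rpow_pos_of_pos (by norm_num) _
  have hinv : 0 < (1 - r)⁻¹ := inv_pos.2 (by linarith)
  set c : ℝ := 8 / α + 6 * (1 + (1 - r)⁻¹) with hc
  have hcpos : 0 < c := by
    have h1 : 0 < 8 / α := by positivity
    have h2 : (0:ℝ) < 6 * (1 + (1 - r)⁻¹) := by nlinarith
    rw [hc]
    linarith
  refine ⟨c, hcpos, ?_⟩
  intro n hn x
  have hkey := S3.key hα0 hα1 n hn x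
  have hΦ : ∀ i : ℕ, 0 ≤ S3.SD (2 ^ i) x := fun i => S3.SD_two_pow_nonneg i x
  have hApos : 0 < cesA α (n - 1) := S3.cesA_a_pos hα0 (n - 1)
  have hAinv : (cesA α n)⁻¹ ≤ (cesA α (n - 1))⁻¹ := by
    apply inv_anti₀ hApos
    exact S3.cesA_a_mono hα0 (by omega)
  have hLHS : |cesKernel α n x| = (cesA α n)⁻¹ * |S3.Tc α n x| := by
    rw [S3.cesKernel_eq_Tc, abs_mul, abs_of_pos (inv_pos.2 (S3.cesA_a_pos hα0 n))]
  have hsum2 : ∑ i ∈ Finset.range (Nat.log 2 n + 1),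
        ((8 / α) * S3.gg α i + 6 * S3.rho α i n) * S3.SD (2 ^ i) x
      ≤ c * ∑ i ∈ Finset.range (Nat.log 2 n + 1), S3.gg α i * S3.SD (2 ^ i) x := by
    rw [Finset.mul_sum]
    refine Finset.sum_le_sum fun i _ => ?_
    have hρ := S3.rho_le hα1 n i
    rw [← hr] at hρ
    have : (8 / α) * S3.gg α i + 6 * S3.rho α i n ≤ c * S3.gg α i := by
      have hρ0 := S3.rho_nonneg α i n
      rw [hc]
      nlinarith [S3.gg_pos α i]
    calc ((8 / α) * S3.gg α i + 6 * S3.rho α i n) * S3.SD (2 ^ i) x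
        ≤ (c * S3.gg α i) * S3.SD (2 ^ i) x := mul_le_mul_of_nonneg_right this (hΦ i)
      _ = c * (S3.gg α i * S3.SD (2 ^ i) x) := by ring
  have hfej : ∀ j : ℕ, (2:ℝ) ^ ((j : ℝ) * α) * fejer (2 ^ j) x
      = S3.gg α j * S3.SD (2 ^ j) x := by
    intro j
    have h1 : fejer (2 ^ j) x = ((2 ^ j : ℕ) : ℝ)⁻¹ * S3.SD (2 ^ j) x := rfl
    rw [h1, S3.cast_two_pow, ← Real.rpow_neg (by norm_num), ← mul_assoc,
      ← Real.rpow_add (by norm_num)]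
    have e : (j : ℝ) * α + -(j : ℝ) = (j : ℝ) * (α - 1) := by ring
    rw [e]
    rfl
  have hRHS : c / cesA α (n - 1) *
        ∑ j ∈ Finset.range (Nat.log 2 n + 1), (2 : ℝ) ^ ((j : ℝ) * α) * fejer (2 ^ j) x
      = (cesA α (n - 1))⁻¹ *
        (c * ∑ i ∈ Finset.range (Nat.log 2 n + 1), S3.gg α i * S3.SD (2 ^ i) x) := by
    rw [Finset.sum_congr rfl fun j _ => hfej j, div_eq_mul_inv]
    ring
  rw [hLHS, hRHS]
  have hstep1 : (cesA α n)⁻¹ * |S3.Tc α n x| ≤ (cesA α (n - 1))⁻¹ * |S3.Tc α n x| :=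
    mul_le_mul_of_nonneg_right hAinv (abs_nonneg _)
  have hsum_nonneg : (0:ℝ) ≤ c * ∑ i ∈ Finset.range (Nat.log 2 n + 1),
      S3.gg α i * S3.SD (2 ^ i) x := by
    refine mul_nonneg (le_of_lt hcpos) (Finset.sum_nonneg fun i _ => ?_)
    exact mul_nonneg (le_of_lt (S3.gg_pos α i)) (hΦ i)
  calc (cesA α n)⁻¹ * |S3.Tc α n x| ≤ (cesA α (n - 1))⁻¹ * |S3.Tc α n x| := hstep1
    _ ≤ (cesA α (n - 1))⁻¹ * (c * ∑ i ∈ Finset.range (Nat.log 2 n + 1),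
          S3.gg α i * S3.SD (2 ^ i) x) := by
        refine mul_le_mul_of_nonneg_left ?_ (le_of_lt (inv_pos.2 hApos))
        exact le_trans hkey hsum2

end
end

section
/- Let 0 < α < 1, M ∈ ℕ, and n > 2^M. There exists a constant c_α depending only on α such that for all integers 0 ≤ k < l ≤ M−1 and every x ∈ I_{l+1}(e_k + e_l), ∫_{I_M} |K_n^α(x+t)| dμ(t) ≤ c_α 2^{αl+k} / (n^α 2^M). -/
open MeasureTheory Filter Finset
open scoped ENNReal NNReal

noncomputable section

namespace S4

open Finset

/-! ### Cesàro numbers -/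

lemma cesA_zero (α : ℝ) : cesA α 0 = 1 := by simp [cesA]

lemma cesA_succ (α : ℝ) (n : ℕ) :
    cesA α (n + 1) = cesA α n * ((α + n + 1) / (n + 1)) := by
  have h1 : ((n : ℝ) + 1) ≠ 0 := by positivity
  have h2 : ((n.factorial : ℝ)) ≠ 0 := Nat.cast_ne_zero.2 n.factorial_ne_zero
  simp only [cesA, prod_range_succ, Nat.factorial_succ]
  push_cast
  rw [div_mul_div_comm]
  congr 1
  ring

lemma cesA_pos {α : ℝ} (hα : -1 < α) (n : ℕ) : 0 < cesA α n := by
  induction n with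
  | zero => simp [cesA]
  | succ n ih =>
      rw [cesA_succ]
      have h0 : (0:ℝ) ≤ (n:ℝ) := Nat.cast_nonneg n
      have h1 : (0:ℝ) < α + n + 1 := by linarith
      have h2 : (0:ℝ) < (n:ℝ) + 1 := by positivity
      exact mul_pos ih (div_pos h1 h2)

lemma cesA_sub_one {α : ℝ} (hα : 0 < α) (n : ℕ) :
    cesA (α - 1) n = cesA α n * (α / (α + n)) := by
  induction n with
  | zero => simp [cesA_zero, div_self hα.ne']
  | succ n ih =>
      have h0 : (0:ℝ) ≤ (n:ℝ) := Nat.cast_nonneg n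
      have h1 : α + (n:ℝ) ≠ 0 := by linarith
      have h2 : α + ((n:ℝ)+1) ≠ 0 := by linarith
      have h3 : ((n:ℝ) + 1) ≠ 0 := by positivity
      rw [cesA_succ, cesA_succ, ih]
      push_cast
      field_simp
      ring

lemma cesA_pascal {α : ℝ} (hα : 0 < α) (n : ℕ) :
    cesA α (n + 1) = cesA α n + cesA (α - 1) (n + 1) := by
  have h0 : (0:ℝ) ≤ (n:ℝ) := Nat.cast_nonneg n
  have h2 : α + ((n:ℝ)+1) ≠ 0 := by linarith
  have h3 : ((n:ℝ) + 1) ≠ 0 := by positivity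
  rw [cesA_sub_one hα, cesA_succ]
  push_cast
  field_simp
  ring

lemma sum_cesA {α : ℝ} (hα : 0 < α) (n : ℕ) :
    ∑ i ∈ range (n + 1), cesA (α - 1) i = cesA α n := by
  induction n with
  | zero => simp [cesA_zero]
  | succ n ih => rw [sum_range_succ, ih, ← cesA_pascal hα]

lemma cesA_mono {α : ℝ} (hα : 0 < α) : Monotone (cesA α) := by
  apply monotone_nat_of_le_succ
  intro n
  rw [cesA_succ]
  have h0 : (0:ℝ) ≤ (n:ℝ) := Nat.cast_nonneg n
  have hp := cesA_pos (show (-1:ℝ) < α by linarith) n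
  have h1 : (1:ℝ) ≤ (α + n + 1) / (n + 1) := by
    rw [le_div_iff₀ (by positivity)]
    linarith
  exact le_mul_of_one_le_right hp.le h1

lemma cesA_anti {α : ℝ} (hα0 : 0 < α) (hα1 : α ≤ 1) : Antitone (cesA (α - 1)) := by
  apply antitone_nat_of_succ_le
  intro n
  rw [cesA_succ]
  have h0 : (0:ℝ) ≤ (n:ℝ) := Nat.cast_nonneg n
  have hp := cesA_pos (show (-1:ℝ) < α - 1 by linarith) n
  have h1 : (α - 1 + n + 1) / (n + 1) ≤ 1 := by
    rw [div_le_one (by positivity)]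
    linarith
  exact mul_le_of_le_one_right hp.le h1

lemma cesA_lower {α : ℝ} (hα0 : 0 ≤ α) (hα1 : α ≤ 1) (n : ℕ) :
    ((n : ℝ) + 1) ^ α ≤ cesA α n := by
  induction n with
  | zero => simp [cesA_zero]
  | succ n ih =>
      have hn1 : (0:ℝ) < (n:ℝ) + 1 := by positivity
      have key : (((n:ℕ)+1 : ℝ) + 1) ^ α ≤ ((n:ℝ) + 1) ^ α * ((α + n + 1) / (n + 1)) := by
        have h1 : ((n:ℝ) + 1 + 1) = ((n:ℝ)+1) * (1 + 1/((n:ℝ)+1)) := by field_simp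
        push_cast
        rw [h1, Real.mul_rpow (by positivity) (by positivity)]
        have hb : (1 + 1/((n:ℝ)+1)) ^ α ≤ 1 + α * (1/((n:ℝ)+1)) := by
          apply rpow_one_add_le_one_add_mul_self _ hα0 hα1
          have h9 : (0:ℝ) ≤ 1/((n:ℝ)+1) := by positivity
          linarith
        have h2 : (1:ℝ) + α * (1/((n:ℝ)+1)) = (α + n + 1) / (n + 1) := by
          field_simp
          ring
        calc ((n:ℝ)+1) ^ α * (1 + 1/((n:ℝ)+1)) ^ α
            ≤ ((n:ℝ)+1) ^ α * (1 + α * (1/((n:ℝ)+1))) := by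
              apply mul_le_mul_of_nonneg_left hb (by positivity)
          _ = ((n:ℝ) + 1) ^ α * ((α + n + 1) / (n + 1)) := by rw [h2]
      rw [cesA_succ]
      push_cast at key ⊢
      calc ((n:ℝ) + 1 + 1) ^ α ≤ ((n:ℝ) + 1) ^ α * ((α + n + 1) / (n + 1)) := key
        _ ≤ cesA α n * ((α + n + 1) / (n + 1)) := by
            have h0 : (0:ℝ) ≤ (n:ℝ) := Nat.cast_nonneg n
            apply mul_le_mul_of_nonneg_right ih
            positivity

lemma cesA_upper {α : ℝ} (hα0 : 0 ≤ α) (hα1 : α ≤ 1) (n : ℕ) :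
    cesA α n ≤ Real.exp 1 * ((n : ℝ) + 1) ^ α := by
  have main : ∀ m : ℕ, cesA α m ≤ Real.exp (α * (1 - 1/((m:ℝ)+1))) * ((m:ℝ)+1) ^ α := by
    intro m
    induction m with
    | zero => simp [cesA_zero]
    | succ m ih =>
        push_cast
        have hrw : ((m:ℝ) + 1 + 1) = (m:ℝ) + 2 := by ring
        rw [hrw]
        have hm1 : (0:ℝ) < (m:ℝ) + 1 := by positivity
        have hm2 : (0:ℝ) < (m:ℝ) + 2 := by positivity
        have step1 : cesA α (m+1) ≤ Real.exp (α * (1 - 1/((m:ℝ)+1))) * ((m:ℝ)+1) ^ α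
            * (1 + α / ((m:ℝ)+1)) := by
          rw [cesA_succ]
          have h2 : (α + (m:ℝ) + 1) / ((m:ℝ) + 1) = 1 + α / ((m:ℝ)+1) := by
            field_simp
            try ring
          rw [h2]
          apply mul_le_mul_of_nonneg_right ih
          positivity
        have step2 : (1:ℝ) + α / ((m:ℝ)+1) ≤ Real.exp (α / ((m:ℝ)+1)) := by
          have := Real.add_one_le_exp (α / ((m:ℝ)+1))
          linarith
        have step3 : Real.exp (α / ((m:ℝ)+2)) ≤ (((m:ℝ)+2)/((m:ℝ)+1)) ^ α := by
          rw [Real.rpow_def_of_pos (by positivity)]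
          apply Real.exp_le_exp.2
          have hlog : 1/((m:ℝ)+2) ≤ Real.log (((m:ℝ)+2)/((m:ℝ)+1)) := by
            have h4 : Real.log (((m:ℝ)+1)/((m:ℝ)+2)) ≤ ((m:ℝ)+1)/((m:ℝ)+2) - 1 :=
              Real.log_le_sub_one_of_pos (by positivity)
            have h5 : Real.log (((m:ℝ)+1)/((m:ℝ)+2)) = - Real.log (((m:ℝ)+2)/((m:ℝ)+1)) := by
              rw [← Real.log_inv]
              congr 1
              field_simp
            have h6 : ((m:ℝ)+1)/((m:ℝ)+2) - 1 = - (1/((m:ℝ)+2)) := by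
              field_simp
              try ring
              try norm_num
            rw [h5, h6] at h4
            linarith
          calc α / ((m:ℝ)+2) = α * (1/((m:ℝ)+2)) := by ring
            _ ≤ α * Real.log (((m:ℝ)+2)/((m:ℝ)+1)) := by
                apply mul_le_mul_of_nonneg_left hlog hα0
            _ = Real.log (((m:ℝ)+2)/((m:ℝ)+1)) * α := by ring
        have step4 : Real.exp (α * (1 - 1/((m:ℝ)+1))) * Real.exp (α / ((m:ℝ)+1))
            = Real.exp (α * (1 - 1/((m:ℝ)+2))) * Real.exp (α / ((m:ℝ)+2)) := by
          rw [← Real.exp_add, ← Real.exp_add]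
          congr 1
          ring
        have step5 : (((m:ℝ)+2)/((m:ℝ)+1)) ^ α * ((m:ℝ)+1) ^ α = ((m:ℝ)+2) ^ α := by
          rw [← Real.mul_rpow (by positivity) (by positivity)]
          congr 1
          field_simp
        calc cesA α (m+1)
            ≤ Real.exp (α * (1 - 1/((m:ℝ)+1))) * ((m:ℝ)+1) ^ α * (1 + α / ((m:ℝ)+1)) := step1
          _ ≤ Real.exp (α * (1 - 1/((m:ℝ)+1))) * ((m:ℝ)+1) ^ α * Real.exp (α / ((m:ℝ)+1)) := by
              apply mul_le_mul_of_nonneg_left step2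
              positivity
          _ = Real.exp (α * (1 - 1/((m:ℝ)+2))) * Real.exp (α / ((m:ℝ)+2)) * ((m:ℝ)+1) ^ α := by
              rw [mul_right_comm, step4]
          _ ≤ Real.exp (α * (1 - 1/((m:ℝ)+2))) * (((m:ℝ)+2)/((m:ℝ)+1)) ^ α * ((m:ℝ)+1) ^ α := by
              apply mul_le_mul_of_nonneg_right _ (by positivity)
              apply mul_le_mul_of_nonneg_left step3 (Real.exp_pos _).le
          _ = Real.exp (α * (1 - 1/((m:ℝ)+2))) * ((m:ℝ)+2) ^ α := by
              rw [mul_assoc, step5]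
  calc cesA α n ≤ Real.exp (α * (1 - 1/((n:ℝ)+1))) * ((n:ℝ)+1) ^ α := main n
    _ ≤ Real.exp 1 * ((n:ℝ)+1) ^ α := by
        apply mul_le_mul_of_nonneg_right _ (by positivity)
        apply Real.exp_le_exp.2
        have h0 : (0:ℝ) < 1/((n:ℝ)+1) := by positivity
        nlinarith

/-! ### chi and Dirichlet-type sums for eG k -/

def chi (k m : ℕ) : ℝ := (-1 : ℝ) ^ (Nat.testBit m k).toNat

def DkF (k R : ℕ) : ℝ := ∑ m ∈ range R, chi k m

lemma testBit_true_of_mem {a b : ℕ} (h1 : 2 ^ a ≤ b) (h2 : b < 2 ^ (a+1)) :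
    Nat.testBit b a = true := by
  rw [Nat.testBit_eq_decide_div_mod_eq]
  have h3 : b / 2 ^ a = 1 := by
    apply Nat.div_eq_of_lt_le
    · omega
    · rw [pow_succ] at h2
      omega
  rw [h3]
  decide

lemma testBit_period {k m : ℕ} : Nat.testBit (2 ^ (k+1) + m) k = Nat.testBit m k := by
  rw [Nat.testBit_eq_decide_div_mod_eq, Nat.testBit_eq_decide_div_mod_eq]
  have h1 : (2 ^ (k+1) + m) / 2 ^ k = m / 2 ^ k + 2 := by
    rw [show 2 ^ (k+1) + m = m + 2 ^ k * 2 by rw [pow_succ]; omega]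
    rw [Nat.add_mul_div_left _ _ (Nat.two_pow_pos k)]
  rw [h1, Nat.add_mod_right]

lemma chi_of_lt {k m : ℕ} (h : m < 2 ^ k) : chi k m = 1 := by
  rw [chi, Nat.testBit_lt_two_pow h]
  rfl

lemma chi_of_mem {k m : ℕ} (h1 : 2 ^ k ≤ m) (h2 : m < 2 ^ (k+1)) : chi k m = -1 := by
  rw [chi, testBit_true_of_mem h1 h2]
  simp

lemma chi_period {k m : ℕ} : chi k (2 ^ (k+1) + m) = chi k m := by
  rw [chi, chi, testBit_period]

lemma DkF_succ (k R : ℕ) : DkF k (R + 1) = DkF k R + chi k R := by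
  rw [DkF, DkF, sum_range_succ]

lemma DkF_two_pow_succ (k : ℕ) : DkF k (2 ^ (k+1)) = 0 := by
  have h : 2 ^ (k+1) = 2 ^ k + 2 ^ k := by rw [pow_succ]; omega
  rw [DkF, h, Finset.sum_range_add]
  have h1 : ∀ m ∈ range (2 ^ k), chi k m = 1 := fun m hm => chi_of_lt (mem_range.1 hm)
  have h2 : ∀ i ∈ range (2 ^ k), chi k (2 ^ k + i) = -1 := by
    intro i hi
    rw [mem_range] at hi
    exact chi_of_mem (by omega) (by rw [pow_succ]; omega)
  rw [Finset.sum_congr rfl h1, Finset.sum_congr rfl h2]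
  simp

lemma DkF_shift (k R : ℕ) : DkF k (2 ^ (k+1) + R) = DkF k R := by
  rw [DkF, Finset.sum_range_add, ← DkF, DkF_two_pow_succ, zero_add, DkF]
  exact Finset.sum_congr rfl fun i _ => chi_period

lemma DkF_bounds (k : ℕ) : ∀ R, 0 ≤ DkF k R ∧ DkF k R ≤ (2:ℝ) ^ k := by
  intro R
  induction R using Nat.strong_induction_on with
  | _ R ih =>
    rcases le_or_gt (2 ^ (k+1)) R with hR | hR
    · have h1 : 2 ^ (k+1) + (R - 2 ^ (k+1)) = R := by omega
      have h2 := ih (R - 2 ^ (k+1)) (by have := Nat.two_pow_pos (k+1); omega)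
      rw [← h1, DkF_shift]
      exact h2
    · rcases le_or_gt R (2 ^ k) with hR2 | hR2
      · have h1 : DkF k R = R := by
          rw [DkF, Finset.sum_congr rfl (fun m hm => chi_of_lt (by rw [mem_range] at hm; omega))]
          simp
        constructor
        · rw [h1]; positivity
        · rw [h1]
          have : ((R:ℝ)) ≤ ((2^k : ℕ) : ℝ) := Nat.cast_le.2 hR2
          push_cast at this
          exact this
      · have h1 : R = 2 ^ k + (R - 2 ^ k) := by omega
        have h2 : DkF k R = (2:ℝ) ^ k - ((R : ℝ) - (2:ℝ)^k) := by
          rw [h1, DkF, Finset.sum_range_add]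
          have ha : ∀ m ∈ range (2 ^ k), chi k m = 1 :=
            fun m hm => chi_of_lt (mem_range.1 hm)
          have hb : ∀ i ∈ range (R - 2 ^ k), chi k (2 ^ k + i) = -1 := by
            intro i hi
            rw [mem_range] at hi
            exact chi_of_mem (by omega) (by rw [pow_succ]; omega)
          rw [Finset.sum_congr rfl ha, Finset.sum_congr rfl hb]
          simp only [Finset.sum_const, Finset.card_range, nsmul_eq_mul, mul_one, mul_neg_one]
          push_cast [Nat.cast_sub hR2.le]
          ring
        have h3 : (R:ℝ) - (2:ℝ)^k ≤ (2:ℝ)^k := by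
          have : ((R:ℝ)) ≤ ((2^(k+1) : ℕ) : ℝ) := Nat.cast_le.2 hR.le
          push_cast [pow_succ] at this
          linarith
        have h4 : (0:ℝ) ≤ (R:ℝ) - (2:ℝ)^k := by
          have : ((2^k : ℕ) : ℝ) ≤ (R:ℝ) := Nat.cast_le.2 hR2.le
          push_cast at this
          linarith
        constructor
        · rw [h2]; linarith
        · rw [h2]; linarith

lemma DkF_two_pow_mul (k c : ℕ) : DkF k (2 ^ (k+1) * c) = 0 := by
  induction c with
  | zero => simp [DkF]
  | succ c ih =>
      have h : 2 ^ (k+1) * (c+1) = 2 ^ (k+1) + 2 ^ (k+1) * c := by ring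
      rw [h, DkF_shift, ih]

lemma DkF_two_pow {k l : ℕ} (hkl : k < l) : DkF k (2 ^ l) = 0 := by
  have h : 2 ^ l = 2 ^ (k+1) * 2 ^ (l - (k+1)) := by
    rw [← pow_add]
    congr 1
    omega
  rw [h, DkF_two_pow_mul]

/-! ### Walsh function lemmas -/

lemma abs_rad (i : ℕ) (y : G) : |rad i y| = 1 := by
  rw [rad, abs_pow, abs_neg, abs_one, one_pow]

lemma abs_walsh (m : ℕ) (y : G) : |walsh m y| = 1 := by
  rw [walsh, Finset.abs_prod]
  apply Finset.prod_eq_one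
  intro i _
  rw [abs_pow, abs_rad, one_pow]

lemma walsh_congr {m : ℕ} {y z : G} (h : ∀ i, Nat.testBit m i = true → y i = z i) :
    walsh m y = walsh m z := by
  unfold walsh
  refine Finset.prod_congr rfl fun i _ => ?_
  cases hb : Nat.testBit m i
  · simp
  · rw [rad, rad, h i hb]

lemma walsh_extend {m T : ℕ} (h : m ≤ T) (y : G) :
    walsh m y = ∏ i ∈ range T, rad i y ^ (Nat.testBit m i).toNat := by
  unfold walsh
  apply Finset.prod_subset (Finset.range_subset_range.2 h)
  intro i _ hi
  rw [mem_range, not_lt] at hi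
  have hb : Nat.testBit m i = false :=
    Nat.testBit_lt_two_pow (lt_of_le_of_lt hi (Nat.lt_two_pow_self (n := i)))
  rw [hb]
  rfl

lemma walsh_split {s v u : ℕ} (hu : u < 2 ^ s) (y : G) :
    walsh (2 ^ s * v + u) y = walsh (2 ^ s * v) y * walsh u y := by
  rw [walsh_extend (le_refl (2 ^ s * v + u)),
      walsh_extend (show 2 ^ s * v ≤ 2 ^ s * v + u by omega),
      walsh_extend (show u ≤ 2 ^ s * v + u by omega), ← Finset.prod_mul_distrib]
  refine Finset.prod_congr rfl fun i _ => ?_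
  rw [← pow_add]
  congr 1
  have h2 := Nat.testBit_two_pow_mul_add v (show 0 < 2 ^ s from Nat.two_pow_pos s) i
  rw [add_zero] at h2
  rw [Nat.testBit_two_pow_mul_add v hu i, h2]
  by_cases his : i < s
  · rw [if_pos his, if_pos his, Nat.zero_testBit]
    simp
  · rw [if_neg his, if_neg his]
    have hui : Nat.testBit u i = false := by
      apply Nat.testBit_lt_two_pow
      calc u < 2 ^ s := hu
        _ ≤ 2 ^ i := Nat.pow_le_pow_right (by norm_num) (not_lt.1 his)
    rw [hui]
    simp

lemma walsh_two_pow (s : ℕ) (y : G) : walsh (2 ^ s) y = rad s y := by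
  unfold walsh
  rw [Finset.prod_eq_single s]
  · rw [Nat.testBit_two_pow_self]
    simp
  · intro i _ his
    rw [Nat.testBit_two_pow_of_ne (Ne.symm his)]
    simp
  · intro hs
    exact absurd (mem_range.2 (Nat.lt_two_pow_self (n := s))) hs

lemma walsh_eG (k u : ℕ) : walsh u (eG k) = chi k u := by
  unfold walsh chi
  have hfac : ∀ i, i ≠ k → rad i (eG k) = 1 := by
    intro i hik
    have h0 : eG k i = 0 := by simp [eG, hik]
    rw [rad, h0]
    simp
  rcases lt_or_ge k u with hk | hk
  · rw [Finset.prod_eq_single k]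
    · have h1 : eG k k = 1 := by simp [eG]
      rw [rad, h1]
      have : (1 : ZMod 2).val = 1 := rfl
      rw [this, pow_one]
    · intro i _ hik
      rw [hfac i hik, one_pow]
    · intro hs
      exact absurd (mem_range.2 hk) hs
  · have hb : Nat.testBit u k = false := by
      apply Nat.testBit_lt_two_pow
      calc u ≤ k := hk
        _ < 2 ^ k := Nat.lt_two_pow_self (n := k)
    rw [hb]
    rw [Finset.prod_eq_one]
    · rfl
    · intro i hi
      rw [mem_range] at hi
      rw [hfac i (by omega), one_pow]

lemma walsh_eq_chi {k l u : ℕ} {y : G}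
    (hy : ∀ i, i < l → y i = eG k i) (hu : u < 2 ^ l) :
    walsh u y = chi k u := by
  rw [← walsh_eG k u]
  apply walsh_congr
  intro i hb
  have h2 : 2 ^ i ≤ u := Nat.ge_two_pow_of_testBit hb
  have hil : i < l := by
    by_contra h
    have : 2 ^ l ≤ 2 ^ i := Nat.pow_le_pow_right (by norm_num) (not_lt.1 h)
    omega
  exact hy i hil

lemma walsh_add_two_pow {l m : ℕ} (hm : Nat.testBit m l = false) (y : G) :
    walsh (m + 2 ^ l) y = rad l y * walsh m y := by
  have hdm : 2 ^ (l+1) * (m / 2 ^ (l+1)) + m % 2 ^ (l+1) = m := Nat.div_add_mod m _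
  set q := m / 2 ^ (l+1) with hq
  set r := m % 2 ^ (l+1) with hr
  have hrlt : r < 2 ^ (l+1) := Nat.mod_lt _ (Nat.two_pow_pos _)
  have hrl : r < 2 ^ l := by
    by_contra h
    have hb : Nat.testBit m l = true := by
      rw [← hdm, Nat.testBit_two_pow_mul_add q hrlt l, if_pos (by omega)]
      exact testBit_true_of_mem (by omega) hrlt
    rw [hb] at hm
    simp at hm
  have h1 : walsh m y = walsh (2 ^ (l+1) * q) y * walsh r y := by
    conv_lhs => rw [← hdm]
    exact walsh_split hrlt y
  have h2 : m + 2 ^ l = 2 ^ (l+1) * q + (r + 2 ^ l) := by omega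
  have h3 : walsh (m + 2 ^ l) y = walsh (2 ^ (l+1) * q) y * walsh (r + 2 ^ l) y := by
    rw [h2]
    exact walsh_split (by rw [pow_succ]; omega) y
  have h4 : walsh (r + 2 ^ l) y = rad l y * walsh r y := by
    have h5 : r + 2 ^ l = 2 ^ l * 1 + r := by omega
    rw [h5, walsh_split hrl y, mul_one, walsh_two_pow]
  rw [h3, h4, h1]
  ring

/-! ### Partial sums over indices with bit l clear -/

def gfun (l : ℕ) (y : G) (m : ℕ) : ℝ := if Nat.testBit m l = false then walsh m y else 0

lemma SS_formula {k l : ℕ} (hkl : k < l) {y : G} (hy : ∀ i, i < l → y i = eG k i) (R : ℕ) :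
    ∑ m ∈ range R, gfun l y m
      = walsh (2 ^ (l+1) * (R / 2 ^ (l+1))) y * DkF k (min (R % 2 ^ (l+1)) (2 ^ l)) := by
  induction R with
  | zero => simp [DkF]
  | succ R ih =>
    rw [sum_range_succ, ih]
    have hdm : 2 ^ (l+1) * (R / 2 ^ (l+1)) + R % 2 ^ (l+1) = R := Nat.div_add_mod R _
    set q := R / 2 ^ (l+1) with hq
    set r := R % 2 ^ (l+1) with hr
    have hrlt : r < 2 ^ (l+1) := Nat.mod_lt _ (Nat.two_pow_pos _)
    have hpow : 2 ^ (l+1) = 2 ^ l * 2 := pow_succ 2 l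
    have hlpos : 0 < 2 ^ l := Nat.two_pow_pos l
    rcases lt_or_ge r (2 ^ l) with hcase | hcase
    · have hbit : Nat.testBit R l = false := by
        rw [← hdm, Nat.testBit_two_pow_mul_add q hrlt l, if_pos (by omega)]
        exact Nat.testBit_lt_two_pow hcase
      have hq' : (R+1) / 2 ^ (l+1) = q := by
        conv_lhs => rw [← hdm]
        rw [show 2 ^ (l+1) * q + r + 1 = 2 ^ (l+1) * q + (r+1) by omega,
          Nat.mul_add_div (Nat.two_pow_pos _), Nat.div_eq_of_lt (by omega), add_zero]
      have hr' : (R+1) % 2 ^ (l+1) = r + 1 := by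
        conv_lhs => rw [← hdm]
        rw [show 2 ^ (l+1) * q + r + 1 = 2 ^ (l+1) * q + (r+1) by omega,
          Nat.mul_add_mod, Nat.mod_eq_of_lt (by omega)]
      have hg : gfun l y R = walsh (2 ^ (l+1) * q) y * chi k r := by
        simp only [gfun, if_pos hbit]
        conv_lhs => rw [← hdm]
        rw [walsh_split hrlt y, walsh_eq_chi hy hcase]
      rw [hq', hr', hg, show min (r+1) (2^l) = r + 1 by omega, show min r (2^l) = r by omega,
        DkF_succ]
      ring
    · have hbit : Nat.testBit R l = true := by
        rw [← hdm, Nat.testBit_two_pow_mul_add q hrlt l, if_pos (by omega)]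
        exact testBit_true_of_mem hcase hrlt
      have hg : gfun l y R = 0 := by simp only [gfun, hbit]; simp
      rcases lt_or_ge (r+1) (2 ^ (l+1)) with hcase2 | hcase2
      · have hq' : (R+1) / 2 ^ (l+1) = q := by
          conv_lhs => rw [← hdm]
          rw [show 2 ^ (l+1) * q + r + 1 = 2 ^ (l+1) * q + (r+1) by omega,
            Nat.mul_add_div (Nat.two_pow_pos _), Nat.div_eq_of_lt hcase2, add_zero]
        have hr' : (R+1) % 2 ^ (l+1) = r + 1 := by
          conv_lhs => rw [← hdm]
          rw [show 2 ^ (l+1) * q + r + 1 = 2 ^ (l+1) * q + (r+1) by omega,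
            Nat.mul_add_mod, Nat.mod_eq_of_lt hcase2]
        rw [hq', hr', hg, show min (r+1) (2^l) = 2^l by omega, show min r (2^l) = 2^l by omega,
          add_zero]
      · have heq : 2 ^ (l+1) * q + r + 1 = 2 ^ (l+1) * (q+1) := by
          rw [Nat.mul_succ]
          omega
        have hq' : (R+1) / 2 ^ (l+1) = q + 1 := by
          conv_lhs => rw [← hdm]
          rw [heq, Nat.mul_div_cancel_left _ (Nat.two_pow_pos _)]
        have hr' : (R+1) % 2 ^ (l+1) = 0 := by
          conv_lhs => rw [← hdm]
          rw [heq, Nat.mul_mod_right]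
        rw [hq', hr', hg, show min r (2^l) = 2^l by omega, DkF_two_pow hkl,
          show min 0 (2^l) = 0 by omega, add_zero, mul_zero]
        simp [DkF]

lemma SS_bound {k l : ℕ} (hkl : k < l) {y : G} (hy : ∀ i, i < l → y i = eG k i) (R : ℕ) :
    |∑ m ∈ range R, gfun l y m| ≤ (2:ℝ) ^ k := by
  rw [SS_formula hkl hy R, abs_mul, abs_walsh, one_mul]
  have h := DkF_bounds k (min (R % 2 ^ (l+1)) (2 ^ l))
  rw [abs_of_nonneg h.1]
  exact h.2

/-! ### Abel summation estimate -/

lemma tele1 (f : ℕ → ℝ) (t : ℕ) : ∑ i ∈ range t, (f (i+1) - f i) = f t - f 0 := by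
  induction t with
  | zero => simp
  | succ t ih => rw [sum_range_succ, ih]; ring

lemma tele2 (f : ℕ → ℝ) (t : ℕ) : ∑ i ∈ range t, (f i - f (i+1)) = f 0 - f t := by
  induction t with
  | zero => simp
  | succ t ih => rw [sum_range_succ, ih]; ring

lemma abel_est (b g : ℕ → ℝ) (L : ℕ) (C : ℝ)
    (hS : ∀ R, R ≤ L → |∑ i ∈ range R, g i| ≤ C) :
    |∑ i ∈ range L, b i * g i| ≤ (|b (L-1)| + ∑ i ∈ range (L-1), |b (i+1) - b i|) * C := by
  have H := Finset.sum_range_by_parts b g L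
  simp only [smul_eq_mul] at H
  rw [H]
  calc |b (L-1) * ∑ i ∈ range L, g i -
        ∑ i ∈ range (L-1), (b (i+1) - b i) * ∑ j ∈ range (i+1), g j|
      ≤ |b (L-1) * ∑ i ∈ range L, g i| +
        |∑ i ∈ range (L-1), (b (i+1) - b i) * ∑ j ∈ range (i+1), g j| := abs_sub _ _
    _ ≤ |b (L-1)| * C + ∑ i ∈ range (L-1), (|b (i+1) - b i| * C) := by
        apply add_le_add
        · rw [abs_mul]
          exact mul_le_mul_of_nonneg_left (hS L le_rfl) (abs_nonneg _)
        · refine (Finset.abs_sum_le_sum_abs _ _).trans (Finset.sum_le_sum ?_)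
          intro i hi
          rw [mem_range] at hi
          rw [abs_mul]
          exact mul_le_mul_of_nonneg_left (hS (i+1) (by omega)) (abs_nonneg _)
    _ = (|b (L-1)| + ∑ i ∈ range (L-1), |b (i+1) - b i|) * C := by
        rw [add_mul, Finset.sum_mul]

lemma abel_est2 (b g : ℕ → ℝ) (L : ℕ) (C B : ℝ)
    (hS : ∀ R, R ≤ L → |∑ i ∈ range R, g i| ≤ C) (hC : 0 ≤ C)
    (hB : |b (L-1)| + ∑ i ∈ range (L-1), |b (i+1) - b i| ≤ B) :
    |∑ i ∈ range L, b i * g i| ≤ B * C :=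
  (abel_est b g L C hS).trans (mul_le_mul_of_nonneg_right hB hC)

/-! ### The main kernel sum bound -/

lemma rad_eq_neg_one {l : ℕ} {y : G} (hyl : y l = 1) : rad l y = -1 := by
  rw [rad, hyl]
  have h : (1 : ZMod 2).val = 1 := rfl
  rw [h, pow_one]

lemma kernel_sum_bound {α : ℝ} (hα0 : 0 < α) (hα1 : α ≤ 1) {k l n : ℕ} (hkl : k < l)
    (hn : 2 ^ l < n) {y : G} (hy : ∀ i, i < l → y i = eG k i) (hyl : y l = 1) :
    |∑ m ∈ range n, cesA α (n - 1 - m) * walsh m y| ≤ 6 * 2 ^ k * cesA α (2 ^ l) := by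
  have hm1 : (-1:ℝ) < α := by linarith
  have hLpos : 0 < 2 ^ l := Nat.two_pow_pos l
  have hL2 : 2 ≤ 2 ^ l := by
    calc 2 = 2 ^ 1 := rfl
      _ ≤ 2 ^ l := Nat.pow_le_pow_right (by norm_num) (by omega)
  set L := 2 ^ l with hLdef
  set N := n - L with hNdef
  have hNpos : 0 < N := by omega
  have hNL : N + L = n := by omega
  -- the decomposition
  have key : ∑ m ∈ range n, cesA α (n - 1 - m) * walsh m y
      = (∑ m ∈ range N, (cesA α (n - 1 - m) - cesA α (n - 1 - (m + L))) * gfun l y m)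
        + ∑ i ∈ range L, cesA α (n - 1 - (N + i)) * gfun l y (N + i) := by
    have e1 := Finset.sum_filter_add_sum_filter_not (range n)
      (fun m => Nat.testBit m l = false) (fun m => cesA α (n - 1 - m) * walsh m y)
    have e2 : ∑ m ∈ (range n).filter (fun m => ¬ (Nat.testBit m l = false)),
          cesA α (n - 1 - m) * walsh m y
        = ∑ m ∈ (range N).filter (fun m => Nat.testBit m l = false),
            (- (cesA α (n - 1 - (m + L)) * walsh m y)) := by
      apply Finset.sum_nbij' (i := fun m => m - L) (j := fun m => m + L)
      · intro m hm
        rw [Finset.mem_filter, mem_range] at hm ⊢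
        have hb : Nat.testBit m l = true := by
          cases h' : Nat.testBit m l
          · exact absurd h' hm.2
          · rfl
        have hge : 2 ^ l ≤ m := Nat.ge_two_pow_of_testBit hb
        constructor
        · omega
        · have h3 : Nat.testBit (2 ^ l + (m - L)) l = !(Nat.testBit (m - L) l) :=
            Nat.testBit_two_pow_add_eq (m - L) l
          rw [show 2 ^ l + (m - L) = m by omega] at h3
          rw [hb] at h3
          cases h4 : Nat.testBit (m - L) l
          · rfl
          · rw [h4] at h3; simp at h3
      · intro m hm
        rw [Finset.mem_filter, mem_range] at hm ⊢
        constructor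
        · omega
        · have h3 : Nat.testBit (2 ^ l + m) l = !(Nat.testBit m l) :=
            Nat.testBit_two_pow_add_eq m l
          rw [hm.2] at h3
          rw [show m + L = 2 ^ l + m by omega, h3]
          simp
      · intro m hm
        rw [Finset.mem_filter, mem_range] at hm
        have hb : Nat.testBit m l = true := by
          cases h' : Nat.testBit m l
          · exact absurd h' hm.2
          · rfl
        have hge : 2 ^ l ≤ m := Nat.ge_two_pow_of_testBit hb
        omega
      · intro m _
        omega
      · intro m hm
        rw [Finset.mem_filter, mem_range] at hm
        have hb : Nat.testBit m l = true := by
          cases h' : Nat.testBit m l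
          · exact absurd h' hm.2
          · rfl
        have hge : 2 ^ l ≤ m := Nat.ge_two_pow_of_testBit hb
        have hbit : Nat.testBit (m - L) l = false := by
          have h3 : Nat.testBit (2 ^ l + (m - L)) l = !(Nat.testBit (m - L) l) :=
            Nat.testBit_two_pow_add_eq (m - L) l
          rw [show 2 ^ l + (m - L) = m by omega, hb] at h3
          cases h4 : Nat.testBit (m - L) l
          · rfl
          · rw [h4] at h3; simp at h3
        have hws : walsh ((m - L) + 2 ^ l) y = rad l y * walsh (m - L) y :=
          walsh_add_two_pow hbit y
        rw [rad_eq_neg_one hyl] at hws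
        have hmm : (m - L) + 2 ^ l = m := by omega
        rw [hmm] at hws
        rw [hws, show (m - L) + L = m by omega]
        ring
    have e3 : ∀ (X : ℕ) (h : ℕ → ℝ),
        ∑ m ∈ (range X).filter (fun m => Nat.testBit m l = false), h m * walsh m y
          = ∑ m ∈ range X, h m * gfun l y m := by
      intro X h
      rw [Finset.sum_filter]
      apply Finset.sum_congr rfl
      intro m _
      by_cases hb : Nat.testBit m l = false
      · rw [if_pos hb]
        simp only [gfun, if_pos hb]
      · rw [if_neg hb]
        simp only [gfun, if_neg hb, mul_zero]
    have e4 : ∑ m ∈ range n, cesA α (n - 1 - m) * gfun l y m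
        = (∑ m ∈ range N, cesA α (n - 1 - m) * gfun l y m)
          + ∑ i ∈ range L, cesA α (n - 1 - (N + i)) * gfun l y (N + i) := by
      have e4' := Finset.sum_range_add (fun m => cesA α (n - 1 - m) * gfun l y m) N L
      rw [hNL] at e4'
      exact e4'
    have e5 : ∑ m ∈ (range N).filter (fun m => Nat.testBit m l = false),
          (- (cesA α (n - 1 - (m + L)) * walsh m y))
        = - ∑ m ∈ range N, cesA α (n - 1 - (m + L)) * gfun l y m := by
      rw [← e3 N (fun m => cesA α (n - 1 - (m + L)))]
      rw [Finset.sum_neg_distrib]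
    calc ∑ m ∈ range n, cesA α (n - 1 - m) * walsh m y
        = (∑ m ∈ (range n).filter (fun m => Nat.testBit m l = false),
             cesA α (n - 1 - m) * walsh m y)
          + ∑ m ∈ (range n).filter (fun m => ¬ (Nat.testBit m l = false)),
              cesA α (n - 1 - m) * walsh m y := e1.symm
      _ = (∑ m ∈ range n, cesA α (n - 1 - m) * gfun l y m)
          - ∑ m ∈ range N, cesA α (n - 1 - (m + L)) * gfun l y m := by
          rw [e2, e5, e3 n (fun m => cesA α (n - 1 - m))]
          ring
      _ = ((∑ m ∈ range N, cesA α (n - 1 - m) * gfun l y m)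
          - ∑ m ∈ range N, cesA α (n - 1 - (m + L)) * gfun l y m)
          + ∑ i ∈ range L, cesA α (n - 1 - (N + i)) * gfun l y (N + i) := by
          rw [e4]
          ring
      _ = (∑ m ∈ range N, (cesA α (n - 1 - m) - cesA α (n - 1 - (m + L))) * gfun l y m)
          + ∑ i ∈ range L, cesA α (n - 1 - (N + i)) * gfun l y (N + i) := by
          rw [← Finset.sum_sub_distrib]
          congr 1
          apply Finset.sum_congr rfl
          intro m _
          ring
  -- bounds on the two pieces
  have hApos : 0 < cesA α L := cesA_pos hm1 L
  have h1le : (1:ℝ) ≤ cesA α L := by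
    have := cesA_mono hα0 (Nat.zero_le L)
    rw [cesA_zero] at this
    exact this
  have hp2k : (0:ℝ) ≤ 2 ^ k := by positivity
  have piece1 : |∑ m ∈ range N, (cesA α (n - 1 - m) - cesA α (n - 1 - (m + L))) * gfun l y m|
      ≤ (2 * cesA α L) * 2 ^ k := by
    apply abel_est2 _ _ _ _ _ (fun R _ => SS_bound hkl hy R) hp2k
    have hbN : cesA α (n - 1 - (N-1)) - cesA α (n - 1 - ((N-1) + L)) = cesA α L - 1 := by
      rw [show n - 1 - (N-1) = L by omega, show n - 1 - ((N-1) + L) = 0 by omega, cesA_zero]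
    have hmono : ∀ i, i < N - 1 →
        0 ≤ (cesA α (n - 1 - (i+1)) - cesA α (n - 1 - ((i+1) + L)))
          - (cesA α (n - 1 - i) - cesA α (n - 1 - (i + L))) := by
      intro i hi
      have hpas1 := cesA_pascal hα0 (n - 2 - i)
      have hpas2 := cesA_pascal hα0 ((n - 2 - i) - L)
      have hanti := cesA_anti hα0 hα1 (show (n - 2 - i) - L + 1 ≤ (n - 2 - i) + 1 by omega)
      rw [show n - 1 - (i+1) = n - 2 - i by omega,
        show n - 1 - ((i+1) + L) = (n - 2 - i) - L by omega,
        show n - 1 - i = (n - 2 - i) + 1 by omega,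
        show n - 1 - (i + L) = ((n - 2 - i) - L) + 1 by omega]
      linarith
    have hTV : ∑ i ∈ range (N-1),
        |(cesA α (n - 1 - (i+1)) - cesA α (n - 1 - ((i+1) + L)))
          - (cesA α (n - 1 - i) - cesA α (n - 1 - (i + L)))|
        = (cesA α (n - 1 - (N-1)) - cesA α (n - 1 - ((N-1) + L)))
          - (cesA α (n - 1 - 0) - cesA α (n - 1 - (0 + L))) := by
      rw [Finset.sum_congr rfl (fun i hi => abs_of_nonneg (hmono i (mem_range.1 hi)))]
      exact tele1 (fun m => cesA α (n - 1 - m) - cesA α (n - 1 - (m + L))) (N-1)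
    rw [hTV, hbN, abs_of_nonneg (by linarith : (0:ℝ) ≤ cesA α L - 1)]
    have hb0 : 0 ≤ cesA α (n - 1 - 0) - cesA α (n - 1 - (0 + L)) := by
      have := cesA_mono hα0 (show n - 1 - (0 + L) ≤ n - 1 - 0 by omega)
      linarith
    linarith
  have piece2 : |∑ i ∈ range L, cesA α (n - 1 - (N + i)) * gfun l y (N + i)|
      ≤ (cesA α L) * (2 * 2 ^ k) := by
    have hS2 : ∀ R, R ≤ L → |∑ i ∈ range R, gfun l y (N + i)| ≤ 2 * 2 ^ k := by
      intro R _
      have e := Finset.sum_range_add (fun m => gfun l y m) N R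
      have e' : ∑ i ∈ range R, gfun l y (N + i)
          = (∑ m ∈ range (N + R), gfun l y m) - ∑ m ∈ range N, gfun l y m := by
        rw [e]; ring
      rw [e']
      calc |(∑ m ∈ range (N + R), gfun l y m) - ∑ m ∈ range N, gfun l y m|
          ≤ |∑ m ∈ range (N + R), gfun l y m| + |∑ m ∈ range N, gfun l y m| := abs_sub _ _
        _ ≤ 2 ^ k + 2 ^ k := add_le_add (SS_bound hkl hy _) (SS_bound hkl hy _)
        _ = 2 * 2 ^ k := by ring
    apply abel_est2 _ _ _ _ _ hS2 (by positivity)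
    have hb2L : cesA α (n - 1 - (N + (L-1))) = 1 := by
      rw [show n - 1 - (N + (L-1)) = 0 by omega, cesA_zero]
    have hmono2 : ∀ i, i < L - 1 →
        0 ≤ cesA α (n - 1 - (N + i)) - cesA α (n - 1 - (N + (i+1))) := by
      intro i hi
      have := cesA_mono hα0 (show n - 1 - (N + (i+1)) ≤ n - 1 - (N + i) by omega)
      linarith
    have hTV2' : ∀ i ∈ range (L-1),
        |cesA α (n - 1 - (N + (i+1))) - cesA α (n - 1 - (N + i))|
        = cesA α (n - 1 - (N + i)) - cesA α (n - 1 - (N + (i+1))) := by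
      intro i hi
      rw [abs_sub_comm]
      exact abs_of_nonneg (hmono2 i (mem_range.1 hi))
    have hTV2 : ∑ i ∈ range (L-1),
        |cesA α (n - 1 - (N + (i+1))) - cesA α (n - 1 - (N + i))|
        = cesA α (n - 1 - (N + 0)) - cesA α (n - 1 - (N + (L-1))) := by
      rw [Finset.sum_congr rfl hTV2']
      exact tele2 (fun i => cesA α (n - 1 - (N + i))) (L-1)
    rw [hTV2, hb2L, abs_one]
    have hb20 : cesA α (n - 1 - (N + 0)) ≤ cesA α L := by
      apply cesA_mono hα0
      omega
    linarith
  rw [key]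
  calc |(∑ m ∈ range N, (cesA α (n - 1 - m) - cesA α (n - 1 - (m + L))) * gfun l y m)
        + ∑ i ∈ range L, cesA α (n - 1 - (N + i)) * gfun l y (N + i)|
      ≤ |∑ m ∈ range N, (cesA α (n - 1 - m) - cesA α (n - 1 - (m + L))) * gfun l y m|
        + |∑ i ∈ range L, cesA α (n - 1 - (N + i)) * gfun l y (N + i)| := abs_add_le _ _
    _ ≤ (2 * cesA α L) * 2 ^ k + (cesA α L) * (2 * 2 ^ k) := add_le_add piece1 piece2
    _ ≤ 6 * 2 ^ k * cesA α L := by nlinarith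

/-! ### Kernel representation -/

lemma dirichlet_swap (y : G) (c : ℕ → ℝ) (n : ℕ) :
    ∑ j ∈ Finset.Icc 1 n, c j * dirichlet j y
      = ∑ m ∈ range n, (∑ j ∈ Finset.Icc (m+1) n, c j) * walsh m y := by
  induction n with
  | zero => simp
  | succ n ih =>
      rw [Finset.sum_Icc_succ_top (by omega : 1 ≤ n + 1), ih, sum_range_succ]
      have h1 : ∀ m ∈ range n, (∑ j ∈ Finset.Icc (m+1) (n+1), c j) * walsh m y
          = (∑ j ∈ Finset.Icc (m+1) n, c j) * walsh m y + c (n+1) * walsh m y := by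
        intro m hm
        rw [mem_range] at hm
        rw [Finset.sum_Icc_succ_top (by omega : m + 1 ≤ n + 1), add_mul]
      rw [Finset.sum_congr rfl h1, Finset.sum_add_distrib]
      rw [Finset.Icc_self (n+1), Finset.sum_singleton]
      have h3 : dirichlet (n+1) y = (∑ m ∈ range n, walsh m y) + walsh n y := by
        rw [dirichlet, sum_range_succ]
      rw [h3, ← Finset.mul_sum]
      ring

lemma inner_coeff {α : ℝ} (hα : 0 < α) {m n : ℕ} (hm : m < n) :
    ∑ j ∈ Finset.Icc (m+1) n, cesA (α - 1) (n - j) = cesA α (n - 1 - m) := by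
  have h0 : Finset.Icc (m+1) n = Finset.Ico (m+1) (n+1) := by
    rw [Finset.Ico_add_one_right_eq_Icc]
  rw [h0, Finset.sum_Ico_eq_sum_range]
  have h1 : n + 1 - (m+1) = n - m := by omega
  rw [h1]
  have h2 : ∀ i ∈ range (n - m), cesA (α-1) (n - (m+1+i)) = cesA (α-1) (n - m - 1 - i) := by
    intro i hi
    congr 1
    omega
  rw [Finset.sum_congr rfl h2]
  rw [Finset.sum_range_reflect (fun i => cesA (α-1) i) (n - m)]
  rw [show n - m = (n - 1 - m) + 1 by omega]
  exact sum_cesA hα (n - 1 - m)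

lemma kernel_pointwise {α : ℝ} (hα0 : 0 < α) (hα1 : α < 1) {k l n : ℕ} (hkl : k < l)
    (hn : 2 ^ l < n) {y : G} (hy : ∀ i, i < l → y i = eG k i) (hyl : y l = 1) :
    |cesKernel α n y| ≤ 33 * 2 ^ k * (2:ℝ) ^ (α * (l:ℝ)) / (n:ℝ) ^ α := by
  have hm1 : (-1:ℝ) < α := by linarith
  have hApos := cesA_pos hm1 n
  have hrepr : cesKernel α n y
      = (cesA α n)⁻¹ * ∑ m ∈ range n, cesA α (n - 1 - m) * walsh m y := by
    rw [cesKernel, dirichlet_swap]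
    congr 1
    apply Finset.sum_congr rfl
    intro m hm
    rw [mem_range] at hm
    rw [inner_coeff hα0 hm]
  rw [hrepr, abs_mul, abs_inv, abs_of_pos hApos]
  have hbound := kernel_sum_bound hα0 hα1.le hkl hn hy hyl
  have hnpos : 0 < n := by have := Nat.two_pow_pos l; omega
  have hlow : (n:ℝ) ^ α ≤ cesA α n := by
    have h1 := cesA_lower hα0.le hα1.le n
    have h2 : (n:ℝ) ^ α ≤ ((n:ℝ) + 1) ^ α :=
      Real.rpow_le_rpow (Nat.cast_nonneg n) (by linarith) hα0.le
    linarith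
  have hnr : (0:ℝ) < (n:ℝ) ^ α := by
    apply Real.rpow_pos_of_pos
    exact_mod_cast hnpos
  have h2al : (0:ℝ) < (2:ℝ) ^ (α * (l:ℝ)) := Real.rpow_pos_of_pos (by norm_num) _
  have hup : cesA α (2 ^ l) ≤ 2 * Real.exp 1 * (2:ℝ) ^ (α * (l:ℝ)) := by
    have h1 := cesA_upper hα0.le hα1.le (2 ^ l)
    have h1l : (1:ℝ) ≤ ((2:ℝ)) ^ l := by
      have := Nat.one_le_two_pow (n := l)
      exact_mod_cast this
    have h2 : ((2 ^ l : ℕ) : ℝ) + 1 ≤ ((2:ℝ)) ^ (l+1) := by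
      push_cast
      rw [pow_succ]
      linarith
    have h3 : (((2 ^ l : ℕ):ℝ) + 1) ^ α ≤ ((2:ℝ) ^ (l+1)) ^ α :=
      Real.rpow_le_rpow (by positivity) h2 hα0.le
    have h4 : ((2:ℝ) ^ (l+1)) ^ α = (2:ℝ) ^ (α * (l:ℝ)) * (2:ℝ) ^ α := by
      rw [← Real.rpow_natCast 2 (l+1), ← Real.rpow_mul (by norm_num : (0:ℝ) ≤ 2),
        ← Real.rpow_add (by norm_num : (0:ℝ) < 2)]
      congr 1
      push_cast
      ring
    have h5 : (2:ℝ) ^ α ≤ 2 := by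
      calc (2:ℝ) ^ α ≤ (2:ℝ) ^ (1:ℝ) :=
            Real.rpow_le_rpow_of_exponent_le (by norm_num) hα1.le
        _ = 2 := Real.rpow_one 2
    have hexp : (0:ℝ) < Real.exp 1 := Real.exp_pos 1
    calc cesA α (2^l) ≤ Real.exp 1 * (((2^l : ℕ):ℝ) + 1) ^ α := h1
      _ ≤ Real.exp 1 * ((2:ℝ) ^ (α * (l:ℝ)) * (2:ℝ) ^ α) := by
          rw [← h4]
          exact mul_le_mul_of_nonneg_left h3 hexp.le
      _ ≤ Real.exp 1 * ((2:ℝ) ^ (α * (l:ℝ)) * 2) := by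
          apply mul_le_mul_of_nonneg_left _ hexp.le
          exact mul_le_mul_of_nonneg_left h5 h2al.le
      _ = 2 * Real.exp 1 * (2:ℝ) ^ (α * (l:ℝ)) := by ring
  have hAL : (0:ℝ) < cesA α (2 ^ l) := cesA_pos hm1 _
  have hp2k : (0:ℝ) < (2:ℝ) ^ k := by positivity
  have hinv : (cesA α n)⁻¹ ≤ ((n:ℝ) ^ α)⁻¹ := by
    apply inv_anti₀ hnr hlow
  calc (cesA α n)⁻¹ * |∑ m ∈ range n, cesA α (n - 1 - m) * walsh m y|
      ≤ (cesA α n)⁻¹ * (6 * 2 ^ k * cesA α (2 ^ l)) :=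
        mul_le_mul_of_nonneg_left hbound (inv_nonneg.2 hApos.le)
    _ ≤ ((n:ℝ) ^ α)⁻¹ * (6 * 2 ^ k * (2 * Real.exp 1 * (2:ℝ) ^ (α * (l:ℝ)))) := by
        apply mul_le_mul hinv _ _ (inv_nonneg.2 hnr.le)
        · apply mul_le_mul_of_nonneg_left hup
          positivity
        · positivity
    _ ≤ ((n:ℝ) ^ α)⁻¹ * (33 * 2 ^ k * (2:ℝ) ^ (α * (l:ℝ))) := by
        apply mul_le_mul_of_nonneg_left _ (inv_nonneg.2 hnr.le)
        have he := Real.exp_one_lt_d9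
        nlinarith [mul_lt_mul_of_pos_right he (mul_pos hp2k h2al)]
    _ = 33 * 2 ^ k * (2:ℝ) ^ (α * (l:ℝ)) / (n:ℝ) ^ α := by
        rw [div_eq_mul_inv]
        ring

/-! ### Measure computations -/

instance : MeasureTheory.Measure.IsAddLeftInvariant μG := by
  unfold μG
  infer_instance

lemma measurableSet_dyadicI (N : ℕ) (z : G) : MeasurableSet (dyadicI N z) := by
  have h : dyadicI N z = ⋂ i ∈ Set.Iio N, (fun y : G => y i) ⁻¹' {z i} := by
    ext y
    simp [dyadicI]
  rw [h]
  exact MeasurableSet.biInter (Set.to_countable _)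
    (fun i _ => measurable_pi_apply i MeasurableSpace.measurableSet_top)

lemma μG_univ : μG Set.univ = 1 := by
  have h := MeasureTheory.Measure.addHaarMeasure_self
    (K₀ := (⊤ : TopologicalSpace.PositiveCompacts G))
  rwa [TopologicalSpace.PositiveCompacts.coe_top] at h

lemma μG_dyadicI (M : ℕ) : μG (dyadicI M 0) = ((2:ℝ≥0∞) ^ M)⁻¹ := by
  classical
  have hz2 : ∀ a b : ZMod 2, (a + b = a) ↔ b = 0 := by decide
  set F : (Fin M → ZMod 2) → Set G := fun c => {y : G | ∀ i : Fin M, y (i:ℕ) = c i} with hF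
  have hmeas : ∀ c, MeasurableSet (F c) := by
    intro c
    have h : F c = ⋂ i : Fin M, (fun y : G => y (i:ℕ)) ⁻¹' {c i} := by
      ext y
      simp [hF]
    rw [h]
    exact MeasurableSet.iInter
      (fun i => measurable_pi_apply _ MeasurableSpace.measurableSet_top)
  have htrans : ∀ c, μG (F c) = μG (dyadicI M 0) := by
    intro c
    set z : G := fun i => if h : i < M then c ⟨i, h⟩ else 0 with hzdef
    have hpre : (fun y : G => z + y) ⁻¹' (F c) = dyadicI M 0 := by
      ext y
      simp only [Set.mem_preimage, hF, Set.mem_setOf_eq, Pi.add_apply, dyadicI]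
      constructor
      · intro h i hi
        have h1 := h ⟨i, hi⟩
        have h2 : z i = c ⟨i, hi⟩ := by
          rw [hzdef]
          simp [hi]
        rw [h2] at h1
        have h3 : y i = 0 := (hz2 _ _).1 h1
        simpa using h3
      · intro h i
        have h1 : y (i:ℕ) = 0 := by
          have := h (i:ℕ) i.2
          simpa using this
        have h2 : z (i:ℕ) = c i := by
          rw [hzdef]
          simp [i.2]
        rw [h1, h2, add_zero]
    calc μG (F c) = μG ((fun y : G => z + y) ⁻¹' (F c)) :=
          (measure_preimage_add μG z (F c)).symm
      _ = μG (dyadicI M 0) := by rw [hpre]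
  have hdisj : Pairwise (Function.onFun Disjoint F) := by
    intro c c' hcc
    rw [Function.onFun, Set.disjoint_left]
    intro y hy hy'
    apply hcc
    funext i
    rw [← hy i, ← hy' i]
  have hcover : (⋃ c, F c) = Set.univ := by
    ext y
    simp only [Set.mem_iUnion, Set.mem_univ, iff_true]
    exact ⟨fun i => y (i:ℕ), fun i => rfl⟩
  have hsum : ∑ c : (Fin M → ZMod 2), μG (F c) = 1 := by
    rw [← tsum_fintype (L := .unconditional _), ← MeasureTheory.measure_iUnion hdisj hmeas, hcover, μG_univ]
  have hcard : (Fintype.card (Fin M → ZMod 2)) = 2 ^ M := by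
    rw [Fintype.card_fun, ZMod.card 2, Fintype.card_fin]
  rw [Finset.sum_congr rfl (fun c _ => htrans c), Finset.sum_const, Finset.card_univ,
    hcard, nsmul_eq_mul] at hsum
  have hc2 : ((2 ^ M : ℕ) : ℝ≥0∞) = (2:ℝ≥0∞) ^ M := by push_cast; ring
  rw [hc2] at hsum
  have hne : ((2:ℝ≥0∞) ^ M) ≠ 0 := by
    apply pow_ne_zero
    norm_num
  have hnt : ((2:ℝ≥0∞) ^ M) ≠ ⊤ := by
    apply ENNReal.pow_ne_top
    norm_num
  calc μG (dyadicI M 0) = 1 * μG (dyadicI M 0) := (one_mul _).symm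
    _ = ((2:ℝ≥0∞) ^ M)⁻¹ * ((2:ℝ≥0∞) ^ M) * μG (dyadicI M 0) := by
        rw [ENNReal.inv_mul_cancel hne hnt]
    _ = ((2:ℝ≥0∞) ^ M)⁻¹ * 1 := by rw [mul_assoc, hsum]
    _ = ((2:ℝ≥0∞) ^ M)⁻¹ := mul_one _

lemma continuous_walsh (m : ℕ) : Continuous (walsh m) := by
  unfold walsh
  apply continuous_finset_prod
  intro i _
  apply Continuous.pow
  unfold rad
  exact (continuous_of_discreteTopology (α := ZMod 2)
    (f := fun v : ZMod 2 => (-1:ℝ) ^ v.val)).comp (continuous_apply i)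

lemma continuous_cesKernel (α : ℝ) (n : ℕ) : Continuous (cesKernel α n) := by
  unfold cesKernel
  apply Continuous.mul continuous_const
  apply continuous_finset_sum
  intro j _
  apply Continuous.mul continuous_const
  unfold dirichlet
  apply continuous_finset_sum
  intro i _
  exact continuous_walsh i

end S4

/-- `∫_{I_M} |K_n^α(x+t)| dμ(t) ≤ c_α 2^{αl+k} / (n^α 2^M)` for
`x ∈ I_{l+1}(e_k + e_l)`, `0 ≤ k < l ≤ M-1`, `n > 2^M`. -/
theorem statement4 (α : ℝ) (hα0 : 0 < α) (hα1 : α < 1) :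
    ∃ c : ℝ, 0 < c ∧ ∀ M : ℕ, ∀ n : ℕ, 2 ^ M < n → ∀ k l : ℕ, k < l → l < M →
      ∀ x ∈ dyadicI (l + 1) (eG k + eG l),
        (∫ t in dyadicI M 0, |cesKernel α n (x + t)| ∂μG) ≤
          c * (2 : ℝ) ^ (α * (l : ℝ)) * 2 ^ k / ((n : ℝ) ^ α * 2 ^ M) := by
  refine ⟨33, by norm_num, ?_⟩
  intro M n hn k l hkl hlM x hx
  have hlt : 2 ^ l < n := by
    have h1 : 2 ^ l < 2 ^ M := Nat.pow_lt_pow_right (by norm_num) hlM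
    omega
  have hnpos : 0 < n := by have := Nat.two_pow_pos M; omega
  set B : ℝ := 33 * 2 ^ k * (2:ℝ) ^ (α * (l:ℝ)) / (n:ℝ) ^ α with hB
  have hBpoint : ∀ t ∈ dyadicI M 0, |cesKernel α n (x + t)| ≤ B := by
    intro t ht
    have hti : ∀ i, i < M → t i = 0 := by
      intro i hi
      have h1 := ht i hi
      simpa using h1
    have hxt : ∀ i, i ≤ l → (x + t) i = (eG k + eG l) i := by
      intro i hi
      have h1 := hx i (by omega)
      have h2 := hti i (by omega)
      show x i + t i = _
      rw [h1, h2, add_zero]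
    have hy1 : ∀ i, i < l → (x + t) i = eG k i := by
      intro i hi
      rw [hxt i (by omega)]
      show eG k i + eG l i = eG k i
      have h3 : eG l i = 0 := by
        simp only [eG]
        rw [if_neg (by omega)]
      rw [h3, add_zero]
    have hy2 : (x + t) l = 1 := by
      rw [hxt l le_rfl]
      show eG k l + eG l l = 1
      have h1 : eG k l = 0 := by
        simp only [eG]
        rw [if_neg (by omega)]
      have h2 : eG l l = 1 := by
        simp [eG]
      rw [h1, h2, zero_add]
    exact S4.kernel_pointwise hα0 hα1 hkl hlt hy1 hy2
  have hμS : μG (dyadicI M 0) = ((2:ℝ≥0∞) ^ M)⁻¹ := S4.μG_dyadicI M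
  have hfin : μG (dyadicI M 0) < ⊤ := by
    rw [hμS]
    exact ENNReal.inv_lt_top.2 (by positivity)
  have hcont : Continuous fun t : G => |cesKernel α n (x + t)| :=
    ((S4.continuous_cesKernel α n).comp (continuous_const.add continuous_id)).abs
  have hint : (∫ t in dyadicI M 0, |cesKernel α n (x + t)| ∂μG)
      ≤ B * (μG (dyadicI M 0)).toReal := by
    have h := norm_setIntegral_le_of_norm_le_const (μ := μG) (s := dyadicI M 0)
      (f := fun t => |cesKernel α n (x + t)|) (C := B) hfin
      (fun t ht => by
        rw [Real.norm_eq_abs, abs_abs]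
        exact hBpoint t ht)
    calc (∫ t in dyadicI M 0, |cesKernel α n (x + t)| ∂μG)
        ≤ ‖∫ t in dyadicI M 0, |cesKernel α n (x + t)| ∂μG‖ := le_abs_self _
      _ ≤ B * (μG (dyadicI M 0)).toReal := h
  have htoReal : (μG (dyadicI M 0)).toReal = ((2:ℝ) ^ M)⁻¹ := by
    rw [hμS]
    simp [ENNReal.toReal_inv, ENNReal.toReal_pow]
  rw [htoReal] at hint
  refine hint.trans ?_
  apply le_of_eq
  rw [hB]
  have hnr : (0:ℝ) < (n:ℝ) ^ α := Real.rpow_pos_of_pos (by exact_mod_cast hnpos) α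
  field_simp

end
end

section
/- Let 0 < α < 1, M ∈ ℕ, and n > 2^M. There exists a constant c_α depending only on α such that for all integers 0 ≤ k ≤ M−1 and every x ∈ I_M(e_k), ∫_{I_M} |K_n^α(x+t)| dμ(t) ≤ c_α 2^k / 2^M. -/
open MeasureTheory Filter Finset
open scoped ENNReal NNReal

noncomputable section

/-! ### Auxiliary lemmas -/

section Aux

lemma abs_rad (k : ℕ) (x : G) : |rad k x| = 1 := by
  unfold rad; rw [abs_pow, abs_neg, abs_one, one_pow]

lemma abs_walsh_le (n : ℕ) (x : G) : |walsh n x| ≤ 1 := by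
  unfold walsh
  rw [Finset.abs_prod]
  refine Finset.prod_le_one (fun i _ => abs_nonneg _) (fun i _ => ?_)
  rw [abs_pow, abs_rad, one_pow]

lemma walsh_eq_prod (n N : ℕ) (hn : n ≤ N) (x : G) :
    walsh n x = ∏ j ∈ Finset.range N, rad j x ^ (Nat.testBit n j).toNat := by
  rw [← Finset.prod_range_mul_prod_Ico _ hn]
  have h1 : ∀ j ∈ Finset.Ico n N, rad j x ^ (Nat.testBit n j).toNat = 1 := by
    intro j hj
    have hjn : n ≤ j := (Finset.mem_Ico.mp hj).1
    have : Nat.testBit n j = false :=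
      Nat.testBit_lt_two_pow (lt_of_lt_of_le (Nat.lt_two_pow_self (n := n))
        (Nat.pow_le_pow_right (by norm_num) hjn))
    simp [this]
  rw [Finset.prod_congr rfl h1, Finset.prod_const_one, mul_one]
  rfl

lemma walsh_mul_split (K i s : ℕ) (hs : s < 2 ^ K) (x : G) :
    walsh (2 ^ K * i + s) x = walsh (2 ^ K * i) x * walsh s x := by
  have h2K : (0:ℕ) < 2 ^ K := Nat.pow_pos (by norm_num)
  set N := 2 ^ K * i + s + K with hN
  have hb : ∀ j, Nat.testBit (2 ^ K * i + s) j =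
      if j < K then Nat.testBit s j else Nat.testBit i (j - K) := fun j =>
    Nat.testBit_two_pow_mul_add i hs j
  have hb0 : ∀ j, Nat.testBit (2 ^ K * i) j =
      if j < K then false else Nat.testBit i (j - K) := by
    intro j
    have := Nat.testBit_two_pow_mul_add i h2K j
    simpa using this
  rw [walsh_eq_prod (2 ^ K * i + s) N (by omega) x,
    walsh_eq_prod (2 ^ K * i) N (by omega) x,
    walsh_eq_prod s N (by omega) x, ← Finset.prod_mul_distrib]
  refine Finset.prod_congr rfl (fun j _ => ?_)
  by_cases hj : j < K
  · rw [hb, hb0, if_pos hj, if_pos hj]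
    simp
  · have hsj : Nat.testBit s j = false :=
      Nat.testBit_lt_two_pow (lt_of_lt_of_le hs
        (Nat.pow_le_pow_right (by norm_num) (le_of_not_gt hj)))
    rw [hb, hb0, if_neg hj, if_neg hj, hsj]
    simp

lemma walsh_two_pow (K : ℕ) (x : G) : walsh (2 ^ K) x = rad K x := by
  unfold walsh
  have hK : K ∈ Finset.range (2 ^ K) := Finset.mem_range.mpr (Nat.lt_two_pow_self (n := K))
  rw [Finset.prod_eq_single_of_mem K hK]
  · simp [Nat.testBit_two_pow_self]
  · intro j _ hj
    rw [Nat.testBit_two_pow_of_ne (Ne.symm hj)]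
    simp

lemma dirichlet_two_pow_succ (K : ℕ) (y : G) :
    dirichlet (2 ^ (K + 1)) y = (1 + rad K y) * dirichlet (2 ^ K) y := by
  unfold dirichlet
  have h : 2 ^ (K + 1) = 2 ^ K + 2 ^ K := by ring
  rw [h, Finset.sum_range_add]
  have h2 : ∀ m ∈ Finset.range (2 ^ K), walsh (2 ^ K + m) y = rad K y * walsh m y := by
    intro m hm
    have := walsh_mul_split K 1 m (Finset.mem_range.mp hm) y
    rw [mul_one] at this
    rw [this, walsh_two_pow]
  rw [Finset.sum_congr rfl h2, ← Finset.mul_sum]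
  ring

lemma dirichlet_two_pow_eq_zero {k : ℕ} {y : G} (hy : y k = 1) :
    dirichlet (2 ^ (k + 1)) y = 0 := by
  rw [dirichlet_two_pow_succ]
  have : rad k y = -1 := by
    unfold rad; rw [hy]
    norm_num [ZMod.val_one]
  rw [this]
  ring

lemma block_sum_zero {k : ℕ} {y : G} (hy : y k = 1) (q : ℕ) :
    ∑ m ∈ Finset.range (2 ^ (k + 1) * q), walsh m y = 0 := by
  induction q with
  | zero => simp
  | succ q ih =>
    have h : 2 ^ (k + 1) * (q + 1) = 2 ^ (k + 1) * q + 2 ^ (k + 1) := by ring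
    rw [h, Finset.sum_range_add]
    have h2 : ∀ m ∈ Finset.range (2 ^ (k + 1)),
        walsh (2 ^ (k + 1) * q + m) y = walsh (2 ^ (k + 1) * q) y * walsh m y := fun m hm =>
      walsh_mul_split (k + 1) q m (Finset.mem_range.mp hm) y
    rw [ih, Finset.sum_congr rfl h2, ← Finset.mul_sum]
    have : ∑ m ∈ Finset.range (2 ^ (k + 1)), walsh m y = 0 := dirichlet_two_pow_eq_zero hy
    rw [this]
    ring

lemma abs_dirichlet_le {k : ℕ} {y : G} (hy : y k = 1) (n : ℕ) :
    |dirichlet n y| ≤ 2 ^ (k + 1) := by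
  set K := 2 ^ (k + 1) with hK
  have hKpos : 0 < K := Nat.pow_pos (by norm_num)
  have hn : n = K * (n / K) + n % K := (Nat.div_add_mod n K).symm
  have hr : n % K < K := Nat.mod_lt _ hKpos
  unfold dirichlet
  rw [hn, Finset.sum_range_add, block_sum_zero hy (n / K), zero_add]
  have h2 : ∀ m ∈ Finset.range (n % K),
      walsh (K * (n / K) + m) y = walsh (K * (n / K)) y * walsh m y := fun m hm =>
    walsh_mul_split (k + 1) (n / K) m (lt_trans (Finset.mem_range.mp hm) hr) y
  rw [Finset.sum_congr rfl h2]
  calc |∑ m ∈ Finset.range (n % K), walsh (K * (n / K)) y * walsh m y|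
      ≤ ∑ m ∈ Finset.range (n % K), |walsh (K * (n / K)) y * walsh m y| :=
        Finset.abs_sum_le_sum_abs _ _
    _ ≤ ∑ m ∈ Finset.range (n % K), 1 := by
        refine Finset.sum_le_sum (fun m _ => ?_)
        rw [abs_mul]
        calc |walsh (K * (n / K)) y| * |walsh m y| ≤ 1 * 1 :=
              mul_le_mul (abs_walsh_le _ _) (abs_walsh_le _ _) (abs_nonneg _) (by norm_num)
          _ = 1 := by norm_num
    _ = ((n % K : ℕ) : ℝ) := by
        rw [Finset.sum_const, Finset.card_range, nsmul_eq_mul, mul_one]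
    _ ≤ ((K : ℕ) : ℝ) := Nat.cast_le.mpr hr.le
    _ = 2 ^ (k + 1) := by rw [hK]; push_cast; ring

/-! ### Cesàro numbers -/

lemma cesA_pos {α : ℝ} (hα : -1 < α) (n : ℕ) : 0 < cesA α n := by
  unfold cesA
  apply div_pos
  · refine Finset.prod_pos (fun i _ => ?_)
    have : (0:ℝ) ≤ i := Nat.cast_nonneg i
    linarith
  · exact_mod_cast Nat.factorial_pos n

lemma cesA_zero (α : ℝ) : cesA α 0 = 1 := by simp [cesA]

lemma cesA_succ (α : ℝ) (n : ℕ) :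
    cesA α (n + 1) = cesA α n * (α + n + 1) / (n + 1) := by
  unfold cesA
  rw [Finset.prod_range_succ, Nat.factorial_succ]
  have h1 : ((n.factorial : ℝ)) ≠ 0 := by exact_mod_cast Nat.factorial_ne_zero n
  have h2 : ((n : ℝ) + 1) ≠ 0 := by positivity
  push_cast
  rw [div_mul_eq_mul_div, div_div, mul_comm ((n : ℝ) + 1) (n.factorial : ℝ)]

lemma cesA_step (α : ℝ) (m : ℕ) :
    cesA α (m + 1) = cesA α m + cesA (α - 1) (m + 1) := by
  unfold cesA
  have hfm : ((m.factorial : ℝ)) ≠ 0 := by exact_mod_cast Nat.factorial_ne_zero m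
  have hm1 : ((m : ℝ) + 1) ≠ 0 := by positivity
  have hprod : ∏ i ∈ Finset.range (m + 1), (α - 1 + i + 1) =
      α * ∏ i ∈ Finset.range m, (α + i + 1) := by
    rw [Finset.prod_range_succ']
    have h : ∀ i ∈ Finset.range m, (α - 1 + ↑(i + 1) + 1) = (α + ↑i + 1) := by
      intro i _; push_cast; ring
    rw [Finset.prod_congr rfl h]
    push_cast
    ring
  rw [hprod, Finset.prod_range_succ, Nat.factorial_succ]
  push_cast
  field_simp
  ring

lemma sum_cesA (α : ℝ) (m : ℕ) :
    ∑ i ∈ Finset.range (m + 1), cesA (α - 1) i = cesA α m := by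
  induction m with
  | zero => simp [cesA]
  | succ m ih => rw [Finset.sum_range_succ, ih, ← cesA_step]

lemma cesA_mono {α : ℝ} (hα : 0 < α) (n : ℕ) : cesA α n ≤ cesA α (n + 1) := by
  rw [cesA_succ]
  have h1 : (0:ℝ) < n + 1 := by positivity
  have h2 : 0 < cesA α n := cesA_pos (by linarith) n
  rw [le_div_iff₀ h1]
  nlinarith

lemma abs_cesKernel_le {α : ℝ} (hα0 : 0 < α) {k : ℕ} {y : G} (hy : y k = 1)
    {n : ℕ} (hn : 1 ≤ n) : |cesKernel α n y| ≤ 2 ^ (k + 1) := by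
  have hApos : 0 < cesA α n := cesA_pos (by linarith) n
  have hA1pos : ∀ m, 0 ≤ cesA (α - 1) m := fun m => (cesA_pos (by linarith) m).le
  unfold cesKernel
  rw [abs_mul, abs_inv, abs_of_pos hApos]
  have hsum1 : ∑ m ∈ Finset.Icc 1 n, cesA (α - 1) (n - m) = cesA α (n - 1) := by
    obtain ⟨p, rfl⟩ : ∃ p, n = p + 1 := ⟨n - 1, by omega⟩
    rw [show Finset.Icc 1 (p + 1) = Finset.Ico 1 (p + 1 + 1) by rw [Finset.Ico_add_one_right_eq_Icc],
      Finset.sum_Ico_eq_sum_range]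
    simp only [Nat.add_sub_cancel]
    have h1 : ∀ m ∈ Finset.range (p + 1), cesA (α - 1) (p + 1 - (1 + m)) =
        cesA (α - 1) (p + 1 - 1 - m) := by
      intro m _
      congr 1
      omega
    rw [Finset.sum_congr rfl h1, Finset.sum_range_reflect, sum_cesA]
  have hb : |∑ m ∈ Finset.Icc 1 n, cesA (α - 1) (n - m) * dirichlet m y|
      ≤ cesA α (n - 1) * 2 ^ (k + 1) := by
    calc |∑ m ∈ Finset.Icc 1 n, cesA (α - 1) (n - m) * dirichlet m y|
        ≤ ∑ m ∈ Finset.Icc 1 n, |cesA (α - 1) (n - m) * dirichlet m y| :=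
          Finset.abs_sum_le_sum_abs _ _
      _ ≤ ∑ m ∈ Finset.Icc 1 n, cesA (α - 1) (n - m) * 2 ^ (k + 1) := by
          refine Finset.sum_le_sum (fun m _ => ?_)
          rw [abs_mul, abs_of_nonneg (hA1pos _)]
          exact mul_le_mul_of_nonneg_left (abs_dirichlet_le hy m) (hA1pos _)
      _ = cesA α (n - 1) * 2 ^ (k + 1) := by rw [← Finset.sum_mul, hsum1]
  have hmono : cesA α (n - 1) ≤ cesA α n := by
    obtain ⟨m, rfl⟩ : ∃ m, n = m + 1 := ⟨n - 1, by omega⟩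
    simpa using cesA_mono hα0 m
  calc (cesA α n)⁻¹ * |∑ m ∈ Finset.Icc 1 n, cesA (α - 1) (n - m) * dirichlet m y|
      ≤ (cesA α n)⁻¹ * (cesA α (n - 1) * 2 ^ (k + 1)) :=
        mul_le_mul_of_nonneg_left hb (inv_nonneg.mpr hApos.le)
    _ ≤ (cesA α n)⁻¹ * (cesA α n * 2 ^ (k + 1)) := by
        refine mul_le_mul_of_nonneg_left ?_ (inv_nonneg.mpr hApos.le)
        exact mul_le_mul_of_nonneg_right hmono (by positivity)
    _ = 2 ^ (k + 1) := by field_simp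

/-! ### Measure computations -/

instance : MeasurableSingletonClass (ZMod 2) :=
  ⟨fun _ => MeasurableSpace.measurableSet_top⟩

lemma measurableSet_dyadicI (n : ℕ) (x : G) : MeasurableSet (dyadicI n x) := by
  have h : dyadicI n x = ⋂ i ∈ Finset.range n, {y : G | y i = x i} := by
    ext y
    simp [dyadicI]
  rw [h]
  refine Set.Finite.measurableSet_biInter (Finset.finite_toSet _) (fun i _ => ?_)
  exact measurableSet_eq_fun (measurable_pi_apply i) measurable_const

instance : MeasurableAdd G := by
  constructor
  · intro c
    exact measurable_pi_lambda _ fun i =>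
      ((measurable_from_top (f := fun a : ZMod 2 => c i + a)).comp (measurable_pi_apply i))
  · intro c
    exact measurable_pi_lambda _ fun i =>
      ((measurable_from_top (f := fun a : ZMod 2 => a + c i)).comp (measurable_pi_apply i))

instance : μG.IsAddLeftInvariant := by
  unfold μG
  exact Measure.isAddLeftInvariant_addHaarMeasure ⊤

instance : IsProbabilityMeasure μG := by
  constructor
  have : (Set.univ : Set G) = ((⊤ : TopologicalSpace.PositiveCompacts G) : Set G) := by
    simp
  rw [this]
  exact Measure.addHaarMeasure_self

lemma zmod2_add_eq_zero_iff : ∀ a b : ZMod 2, a + b = 0 ↔ b = a := by decide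

lemma measure_dyadicI_eq (M : ℕ) (c : G) : μG (dyadicI M c) = μG (dyadicI M 0) := by
  have h : dyadicI M c = (fun y => c + y) ⁻¹' dyadicI M 0 := by
    ext y
    simp only [dyadicI, Set.mem_setOf_eq, Set.mem_preimage, Pi.add_apply, Pi.zero_apply]
    exact forall₂_congr fun i _ => (zmod2_add_eq_zero_iff (c i) (y i)).symm
  rw [h, measure_preimage_add]

def embedG (M : ℕ) (v : Fin M → ZMod 2) : G := fun i => if h : i < M then v ⟨i, h⟩ else 0

lemma measure_dyadicI_zero (M : ℕ) : μG (dyadicI M 0) = ((2 : ℝ≥0∞) ^ M)⁻¹ := by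
  classical
  have hdisj : Pairwise (Function.onFun Disjoint fun v : Fin M → ZMod 2 =>
      dyadicI M (embedG M v)) := by
    intro v w hvw
    rw [Function.onFun, Set.disjoint_left]
    intro y hyv hyw
    apply hvw
    funext ⟨i, hi⟩
    have h1 := hyv i hi
    have h2 := hyw i hi
    rw [embedG, dif_pos hi] at h1
    rw [embedG, dif_pos hi] at h2
    rw [← h1, ← h2]
  have hcover : (⋃ v : Fin M → ZMod 2, dyadicI M (embedG M v)) = Set.univ := by
    ext y
    simp only [Set.mem_iUnion, Set.mem_univ, iff_true]
    refine ⟨fun j => y j, fun i hi => ?_⟩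
    rw [embedG, dif_pos hi]
  have hmeas := measure_iUnion (μ := μG) hdisj (fun v => measurableSet_dyadicI M _)
  rw [hcover, measure_univ, tsum_fintype] at hmeas
  have hconst : ∀ v : Fin M → ZMod 2, μG (dyadicI M (embedG M v)) = μG (dyadicI M 0) :=
    fun v => measure_dyadicI_eq M _
  rw [Finset.sum_congr rfl (fun v _ => hconst v), Finset.sum_const] at hmeas
  have hcard : (Finset.univ : Finset (Fin M → ZMod 2)).card = 2 ^ M := by
    simp [Fintype.card_fun]
  rw [hcard, nsmul_eq_mul] at hmeas
  have h2M : ((2 : ℝ≥0∞) ^ M) ≠ 0 := by positivity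
  have h2M' : ((2 : ℝ≥0∞) ^ M) ≠ ⊤ := by
    exact ENNReal.pow_ne_top (by norm_num)
  have hcast : ((2 ^ M : ℕ) : ℝ≥0∞) = (2 : ℝ≥0∞) ^ M := by push_cast; ring
  rw [hcast] at hmeas
  calc μG (dyadicI M 0) = ((2:ℝ≥0∞)^M)⁻¹ * ((2:ℝ≥0∞)^M * μG (dyadicI M 0)) := by
        rw [← mul_assoc, ENNReal.inv_mul_cancel h2M h2M', one_mul]
    _ = ((2:ℝ≥0∞)^M)⁻¹ := by rw [hmeas.symm]; simp

/-! ### Continuity -/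

lemma continuous_rad (k : ℕ) : Continuous (rad k) :=
  (continuous_of_discreteTopology (f := fun a : ZMod 2 => ((-1 : ℝ)) ^ a.val)).comp
    (continuous_apply k)

lemma continuous_walsh (n : ℕ) : Continuous (walsh n) := by
  unfold walsh
  exact continuous_finset_prod _ fun i _ => (continuous_rad i).pow _

lemma continuous_dirichlet (n : ℕ) : Continuous (dirichlet n) := by
  unfold dirichlet
  exact continuous_finset_sum _ fun i _ => continuous_walsh i

lemma continuous_cesKernel (α : ℝ) (n : ℕ) : Continuous (cesKernel α n) := by
  unfold cesKernel
  exact continuous_const.mul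
    (continuous_finset_sum _ fun i _ => continuous_const.mul (continuous_dirichlet i))

end Aux

/-- `∫_{I_M} |K_n^α(x+t)| dμ(t) ≤ c_α 2^k / 2^M` for
`x ∈ I_M(e_k)`, `0 ≤ k ≤ M-1`, `n > 2^M`. -/
theorem statement5 (α : ℝ) (hα0 : 0 < α) (hα1 : α < 1) :
    ∃ c : ℝ, 0 < c ∧ ∀ M : ℕ, ∀ n : ℕ, 2 ^ M < n → ∀ k : ℕ, k < M →
      ∀ x ∈ dyadicI M (eG k),
        (∫ t in dyadicI M 0, |cesKernel α n (x + t)| ∂μG) ≤ c * 2 ^ k / 2 ^ M := by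
  refine ⟨2, by norm_num, ?_⟩
  intro M n hn k hk x hx
  have hn1 : 1 ≤ n := le_trans (Nat.one_le_two_pow) hn.le
  -- pointwise bound
  have hpt : ∀ t ∈ dyadicI M 0, |cesKernel α n (x + t)| ≤ 2 ^ (k + 1) := by
    intro t ht
    have hxk : x k = 1 := by
      have := hx k hk
      rw [this, eG, if_pos rfl]
    have htk : t k = 0 := ht k hk
    have hy : (x + t) k = 1 := by
      rw [Pi.add_apply, hxk, htk, add_zero]
    exact abs_cesKernel_le hα0 hy hn1
  set s := dyadicI M 0 with hs
  have hμs : μG s = ((2 : ℝ≥0∞) ^ M)⁻¹ := measure_dyadicI_zero M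
  have hμslt : μG s < ⊤ := measure_lt_top μG s
  have hcont : Continuous fun t => |cesKernel α n (x + t)| :=
    ((continuous_cesKernel α n).comp (continuous_const.add continuous_id)).abs
  have hintle : ∫ t in s, |cesKernel α n (x + t)| ∂μG ≤ 2 ^ (k + 1) * (μG s).toReal := by
    have hnorm := norm_setIntegral_le_of_norm_le_const (C := 2 ^ (k + 1)) hμslt
      (fun t ht => by rw [Real.norm_eq_abs, abs_abs]; exact hpt t ht)
    calc ∫ t in s, |cesKernel α n (x + t)| ∂μG
        ≤ ‖∫ t in s, |cesKernel α n (x + t)| ∂μG‖ := le_abs_self _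
      _ ≤ 2 ^ (k + 1) * (μG s).toReal := hnorm
  have htoReal : (μG s).toReal = ((2 : ℝ) ^ M)⁻¹ := by
    rw [hμs, ENNReal.toReal_inv]
    norm_num
  rw [htoReal] at hintle
  calc ∫ t in s, |cesKernel α n (x + t)| ∂μG ≤ 2 ^ (k + 1) * ((2 : ℝ) ^ M)⁻¹ := hintle
    _ = 2 * 2 ^ k / 2 ^ M := by rw [pow_succ]; ring


end
end
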